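/- arXiv:math/0610640 — 3 statements merged into one kernel-verified Lean document; each statement's English description precedes it below -/
import Mathlib

section
/- Let (τ_1,...,τ_r) be a minimal transitive star factorization of π ∈ S_n, and let σ, σ̂ be distinct cycles of π. Suppose there exist indices a < c < b such that τ_a and τ_b meet σ while τ_c meets σ̂. Then the orbit of σ̂ does not contain the symbol 1, and every index j with τ_j meeting σ̂ satisfies a < j < b. -/
def IsStarList {n : ℕ} [NeZero n] (l : List (Equiv.Perm (Fin n))) : Prop :=
  ∀ τ ∈ l, ∃ i : Fin n, i ≠ 0 ∧ τ = Equiv.swap 0 i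

def IsStarFactorization {n : ℕ} [NeZero n] (π : Equiv.Perm (Fin n))
    (l : List (Equiv.Perm (Fin n))) : Prop :=
  IsStarList l ∧ l.prod = π

def IsTransitiveList {n : ℕ} (l : List (Equiv.Perm (Fin n))) : Prop :=
  ∀ x y : Fin n, ∃ g ∈ Subgroup.closure {τ | τ ∈ l}, g x = y

/-- Number of cycles of `π`, counting fixed points as cycles. -/
def numCycles {n : ℕ} (π : Equiv.Perm (Fin n)) : ℕ :=
  π.cycleType.card + (Finset.univ.filter fun x => π x = x).card

/-- A minimal transitive star factorization: transitive of length `n + m - 2`. -/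
def IsMinimalTransitiveStarFactorization {n : ℕ} [NeZero n] (π : Equiv.Perm (Fin n))
    (l : List (Equiv.Perm (Fin n))) : Prop :=
  IsStarFactorization π l ∧ IsTransitiveList l ∧ l.length = n + numCycles π - 2

open Equiv Equiv.Perm Finset

namespace StarFact

variable {n : ℕ} [NeZero n]

lemma sameCycle_nat {f : Equiv.Perm (Fin n)} {x y : Fin n} :
    f.SameCycle x y ↔ ∃ k : ℕ, (f ^ k) x = y := by
  constructor
  · intro h
    obtain ⟨i, _, hi⟩ := h.exists_pow_eq'
    exact ⟨i, hi⟩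
  · rintro ⟨k, rfl⟩
    exact ⟨(k : ℤ), by rw [zpow_natCast]⟩

section OC

variable {g : Fin n} {ρ ρ' : Equiv.Perm (Fin n)}

lemma role_swap (h : ρ' = Equiv.swap 0 g * ρ) : ρ = Equiv.swap 0 g * ρ' := by
  rw [h, Equiv.swap_mul_self_mul]

lemma rho'_apply (h : ρ' = Equiv.swap 0 g * ρ) (x : Fin n) :
    ρ' x = Equiv.swap 0 g (ρ x) := by rw [h]; rfl

/-- orbit of x avoids 0 and g: forward orbits agree -/
lemma pow_agree (h : ρ' = Equiv.swap 0 g * ρ)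
    (hx : ∀ y, ρ.SameCycle x y → y ≠ 0 ∧ y ≠ g) :
    ∀ k : ℕ, (ρ' ^ k) x = (ρ ^ k) x := by
  intro k
  induction k with
  | zero => rfl
  | succ k ih =>
    rw [pow_succ', Equiv.Perm.mul_apply, pow_succ', Equiv.Perm.mul_apply, ih, rho'_apply h]
    have := hx ((ρ ^ (k+1)) x) ⟨(k+1 : ℕ), by rw [zpow_natCast]⟩
    rw [pow_succ', Equiv.Perm.mul_apply] at this
    exact Equiv.swap_apply_of_ne_of_ne this.1 this.2

lemma OC1 (h : ρ' = Equiv.swap 0 g * ρ)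
    (hx : ∀ y, ρ.SameCycle x y → y ≠ 0 ∧ y ≠ g) :
    ∀ b, ρ.SameCycle x b ↔ ρ'.SameCycle x b := by
  intro b
  rw [sameCycle_nat, sameCycle_nat]
  constructor
  · rintro ⟨k, rfl⟩; exact ⟨k, pow_agree h hx k⟩
  · rintro ⟨k, rfl⟩; exact ⟨k, (pow_agree h hx k).symm⟩

lemma OC3 (h : ρ' = Equiv.swap 0 g * ρ) :
    ∀ z, ρ'.SameCycle 0 z → ρ.SameCycle 0 z ∨ ρ.SameCycle g z := by
  have key : ∀ c : Fin n, (ρ.SameCycle 0 c ∨ ρ.SameCycle g c) →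
      (ρ.SameCycle 0 (ρ' c) ∨ ρ.SameCycle g (ρ' c)) := by
    intro c hc
    rw [rho'_apply h]
    rcases eq_or_ne (ρ c) 0 with h0 | h0
    · rw [h0, Equiv.swap_apply_left]; exact Or.inr (Equiv.Perm.SameCycle.refl _ _)
    rcases eq_or_ne (ρ c) g with hgc | hgc
    · rw [hgc, Equiv.swap_apply_right]; exact Or.inl (Equiv.Perm.SameCycle.refl _ _)
    rw [Equiv.swap_apply_of_ne_of_ne h0 hgc]
    rcases hc with hc | hc
    · exact Or.inl (Equiv.Perm.sameCycle_apply_right.mpr hc)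
    · exact Or.inr (Equiv.Perm.sameCycle_apply_right.mpr hc)
  intro z hz
  rw [sameCycle_nat] at hz
  obtain ⟨k, rfl⟩ := hz
  induction k with
  | zero => exact Or.inl (Equiv.Perm.SameCycle.refl _ _)
  | succ k ih =>
    rw [pow_succ', Equiv.Perm.mul_apply]
    exact key _ ih

section Merge

variable (hg : g ≠ 0) (hm : ¬ρ.SameCycle 0 g)

include hg hm

lemma L4a (h : ρ' = Equiv.swap 0 g * ρ) :
    ∀ (k : ℕ) (z : Fin n), (ρ ^ (k+1)) z = 0 → ρ.SameCycle 0 z → ρ'.SameCycle z g := by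
  intro k
  induction k with
  | zero =>
    intro z hz _
    rw [pow_one] at hz
    have : ρ' z = g := by rw [rho'_apply h, hz, Equiv.swap_apply_left]
    exact ⟨1, by simpa using this⟩
  | succ k ih =>
    intro z hz hz0
    set y := ρ z with hy
    have hyk : (ρ ^ (k+1)) y = 0 := by
      rw [hy, ← Equiv.Perm.mul_apply, ← pow_succ]
      exact hz
    rcases eq_or_ne y 0 with h0 | h0
    · have : ρ' z = g := by rw [rho'_apply h, ← hy, h0, Equiv.swap_apply_left]
      exact ⟨1, by simpa using this⟩
    rcases eq_or_ne y g with hgy | hgy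
    · exact absurd (Equiv.Perm.SameCycle.symm ⟨(k+1 : ℕ), by rw [zpow_natCast, ← hgy, hyk]⟩) hm
    have hstep : ρ' z = y := by
      rw [rho'_apply h, ← hy, Equiv.swap_apply_of_ne_of_ne h0 hgy]
    have hy0 : ρ.SameCycle 0 y := Equiv.Perm.sameCycle_apply_right.mpr hz0
    exact (show ρ'.SameCycle z y from ⟨1, by simpa using hstep⟩).trans (ih y hyk hy0)

lemma L4b (h : ρ' = Equiv.swap 0 g * ρ) : ρ'.SameCycle 0 g := by
  have h1 : (ρ ^ (orderOf ρ - 1 + 1)) (0 : Fin n) = 0 := by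
    rw [Nat.sub_add_cancel (orderOf_pos ρ), pow_orderOf_eq_one]
    rfl
  exact L4a hg hm h _ 0 h1 (Equiv.Perm.SameCycle.refl _ _)

lemma L4c (h : ρ' = Equiv.swap 0 g * ρ) :
    ∀ z, ρ.SameCycle 0 z → ρ'.SameCycle 0 z := by
  intro z hz
  obtain ⟨j, hj⟩ := sameCycle_nat.mp hz.symm
  rcases j with _ | k
  · simp only [pow_zero, Equiv.Perm.one_apply] at hj
    rw [hj]
  · exact ((L4a hg hm h k z hj hz).trans (L4b hg hm h).symm).symm

lemma L4d (h : ρ' = Equiv.swap 0 g * ρ) :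
    ∀ (k : ℕ) (z : Fin n), (ρ ^ (k+1)) z = g → ρ'.SameCycle z 0 := by
  intro k
  induction k with
  | zero =>
    intro z hz
    rw [pow_one] at hz
    have : ρ' z = 0 := by rw [rho'_apply h, hz, Equiv.swap_apply_right]
    exact (⟨1, by simpa using this⟩ : ρ'.SameCycle z 0)
  | succ k ih =>
    intro z hz
    set y := ρ z with hy
    have hyk : (ρ ^ (k+1)) y = g := by
      rw [hy, ← Equiv.Perm.mul_apply, ← pow_succ]
      exact hz
    rcases eq_or_ne y 0 with h0 | h0
    · exact absurd ⟨(k+1 : ℕ), by rw [zpow_natCast, ← h0, hyk]⟩ hm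
    rcases eq_or_ne y g with hgy | hgy
    · have : ρ' z = 0 := by rw [rho'_apply h, ← hy, hgy, Equiv.swap_apply_right]
      exact ⟨1, by simpa using this⟩
    have hstep : ρ' z = y := by
      rw [rho'_apply h, ← hy, Equiv.swap_apply_of_ne_of_ne h0 hgy]
    exact (show ρ'.SameCycle z y from ⟨1, by simpa using hstep⟩).trans (ih y hyk)

lemma L4e (h : ρ' = Equiv.swap 0 g * ρ) :
    ∀ z, ρ.SameCycle g z → ρ'.SameCycle 0 z := by
  intro z hz
  obtain ⟨j, hj⟩ := sameCycle_nat.mp hz.symm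
  rcases j with _ | k
  · simp only [pow_zero, Equiv.Perm.one_apply] at hj
    rw [hj]; exact L4b hg hm h
  · exact ((L4d hg hm h k z hj).symm)

lemma M2 (h : ρ' = Equiv.swap 0 g * ρ) :
    ∀ z, ρ'.SameCycle 0 z ↔ (ρ.SameCycle 0 z ∨ ρ.SameCycle g z) := by
  intro z
  constructor
  · exact OC3 h z
  · rintro (hz | hz)
    · exact L4c hg hm h z hz
    · exact L4e hg hm h z hz

end Merge

section Split

variable (hg : g ≠ 0) (hs : ρ.SameCycle 0 g)

include hg hs

lemma OC4 (h : ρ' = Equiv.swap 0 g * ρ) : ¬ρ'.SameCycle 0 g := by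
  classical
  obtain ⟨i, hi⟩ := sameCycle_nat.mp hs
  have hex : ∃ k, 0 < k ∧ (ρ ^ k) (0 : Fin n) = g := by
    refine ⟨i, ?_, hi⟩
    rcases Nat.eq_zero_or_pos i with rfl | hpos
    · simp only [pow_zero] at hi; exact absurd hi.symm hg
    · exact hpos
  have hspec := Nat.find_spec hex
  have hminfind : ∀ i, i < Nat.find hex → ¬(0 < i ∧ (ρ ^ i) (0 : Fin n) = g) :=
    fun i h => Nat.find_min hex h
  set j := Nat.find hex with hjdef
  clear_value j
  obtain ⟨hjpos, hjg⟩ := hspec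
  have hmin : ∀ i, 0 < i → i < j → (ρ ^ i) (0 : Fin n) ≠ g := by
    intro i hipos hij hig
    exact hminfind i hij ⟨hipos, hig⟩
  have hmin0 : ∀ i, 0 < i → i < j → (ρ ^ i) (0 : Fin n) ≠ 0 := by
    intro i hipos hij hi0
    have : (ρ ^ (j - i)) (0 : Fin n) = g := by
      have : (ρ ^ (j - i)) ((ρ ^ i) (0 : Fin n)) = g := by
        rw [← Equiv.Perm.mul_apply, ← pow_add, Nat.sub_add_cancel hij.le, hjg]
      rwa [hi0] at this
    exact hmin (j - i) (by omega) (by omega) this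
  have key : ∀ k : ℕ, (ρ' ^ k) (0 : Fin n) = (ρ ^ (k % j)) 0 := by
    intro k
    induction k with
    | zero => simp
    | succ k ih =>
      rw [pow_succ', Equiv.Perm.mul_apply, ih, rho'_apply h]
      have hstep : ρ ((ρ ^ (k % j)) (0 : Fin n)) = (ρ ^ (k % j + 1)) 0 := by
        rw [pow_succ', Equiv.Perm.mul_apply]
      rw [hstep]
      rcases eq_or_ne (k % j + 1) j with hj1 | hj1
      · rw [hj1, hjg, Equiv.swap_apply_right]
        have hk1 : k + 1 = j * (k / j + 1) := by
          have := Nat.div_add_mod k j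
          rw [Nat.mul_succ]
          omega
        have : (k + 1) % j = 0 := by rw [hk1, Nat.mul_mod_right]
        rw [this, pow_zero]; rfl
      · have hmlt : k % j < j := Nat.mod_lt k hjpos
        have hlt : k % j + 1 < j := lt_of_le_of_ne (Nat.succ_le_of_lt hmlt) hj1
        have h0 : (ρ ^ (k % j + 1)) (0 : Fin n) ≠ 0 := hmin0 _ (Nat.succ_pos _) hlt
        have hgg : (ρ ^ (k % j + 1)) (0 : Fin n) ≠ g := hmin _ (Nat.succ_pos _) hlt
        rw [Equiv.swap_apply_of_ne_of_ne h0 hgg]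
        congr 1
        have hk1 : k + 1 = (k % j + 1) + j * (k / j) := by
          have := Nat.div_add_mod k j
          omega
        rw [hk1, Nat.add_mul_mod_self_left, Nat.mod_eq_of_lt hlt]
  intro hcon
  obtain ⟨k, hk⟩ := sameCycle_nat.mp hcon
  rw [key k] at hk
  rcases Nat.eq_zero_or_pos (k % j) with h0 | hpos
  · rw [h0] at hk; simp only [pow_zero] at hk; exact hg hk.symm
  · exact hmin _ hpos (Nat.mod_lt k hjpos) hk

lemma S2 (h : ρ' = Equiv.swap 0 g * ρ) :
    ∀ z, ρ.SameCycle 0 z ↔ (ρ'.SameCycle 0 z ∨ ρ'.SameCycle g z) := by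
  intro z
  have h' : ρ = Equiv.swap 0 g * ρ' := role_swap h
  constructor
  · exact OC3 h' z
  · rintro (hz | hz)
    · exact L4c hg (OC4 hg hs h) h' z hz
    · exact L4e hg (OC4 hg hs h) h' z hz

end Split

end OC

section Count

def orbFinset (f : Equiv.Perm (Fin n)) (x : Fin n) : Finset (Fin n) :=
  univ.filter (f.SameCycle x ·)

lemma mem_orbFinset {f : Equiv.Perm (Fin n)} {x y : Fin n} :
    y ∈ orbFinset f x ↔ f.SameCycle x y := by
  simp [orbFinset]

lemma mem_orb_self (f : Equiv.Perm (Fin n)) (x : Fin n) : x ∈ orbFinset f x :=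
  mem_orbFinset.mpr (Equiv.Perm.SameCycle.refl _ _)

lemma orb_eq_of_mem {f : Equiv.Perm (Fin n)} {x y : Fin n} (hy : y ∈ orbFinset f x) :
    orbFinset f y = orbFinset f x := by
  rw [mem_orbFinset] at hy
  ext z
  rw [mem_orbFinset, mem_orbFinset]
  exact ⟨fun hz => hy.trans hz, fun hz => hy.symm.trans hz⟩

lemma orb_fixed {f : Equiv.Perm (Fin n)} {x : Fin n} (hx : f x = x) :
    orbFinset f x = {x} := by
  ext y
  rw [mem_orbFinset, mem_singleton]
  constructor
  · intro hxy
    obtain ⟨k, hk⟩ := sameCycle_nat.mp hxy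
    have hpow : ∀ m : ℕ, (f ^ m) x = x := by
      intro m
      induction m with
      | zero => rfl
      | succ m ih => rw [pow_succ', Equiv.Perm.mul_apply, ih, hx]
    rw [← hk, hpow k]
  · rintro rfl; exact Equiv.Perm.SameCycle.refl _ _

def numOrbits (f : Equiv.Perm (Fin n)) : ℕ := (univ.image (orbFinset f)).card

lemma numOrbits_eq_numCycles (f : Equiv.Perm (Fin n)) : numOrbits f = numCycles f := by
  classical
  have hsplit : (univ : Finset (Fin n)) = f.support ∪ f.supportᶜ := by
    simp
  have himage : univ.image (orbFinset f) =
      f.support.image (orbFinset f) ∪ f.supportᶜ.image (orbFinset f) := by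
    rw [hsplit, Finset.image_union]
  -- small orbits
  have hsmall : f.supportᶜ.image (orbFinset f) = f.supportᶜ.image (fun x => ({x} : Finset (Fin n))) := by
    apply Finset.image_congr
    intro x hx
    simp only [Finset.mem_coe, Finset.mem_compl, Equiv.Perm.mem_support, not_not] at hx
    exact orb_fixed hx
  have hsmallcard : (f.supportᶜ.image (orbFinset f)).card = f.supportᶜ.card := by
    rw [hsmall]
    exact Finset.card_image_of_injective _ (fun a b hab => by
      simpa using hab)
  -- big orbits
  have hbigset : f.support.image (orbFinset f) = f.cycleFactorsFinset.image Equiv.Perm.support := by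
    ext s
    simp only [Finset.mem_image]
    constructor
    · rintro ⟨x, hx, rfl⟩
      refine ⟨f.cycleOf x, Equiv.Perm.cycleOf_mem_cycleFactorsFinset_iff.mpr hx, ?_⟩
      ext y
      rw [Equiv.Perm.mem_support_cycleOf_iff, mem_orbFinset]
      exact ⟨fun h => h.1, fun h => ⟨h, hx⟩⟩
    · rintro ⟨c, hc, rfl⟩
      have hc1 := (Equiv.Perm.mem_cycleFactorsFinset_iff.mp hc).1
      obtain ⟨x, hx⟩ := hc1.nonempty_support
      refine ⟨x, ?_, ?_⟩
      · have := (Equiv.Perm.mem_cycleFactorsFinset_iff.mp hc).2 x hx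
        rw [Equiv.Perm.mem_support] at hx ⊢
        rwa [this] at hx
      · have hcx : c = f.cycleOf x := Equiv.Perm.cycle_is_cycleOf hx hc
        have hxs : x ∈ f.support := by
          have := (Equiv.Perm.mem_cycleFactorsFinset_iff.mp hc).2 x hx
          rw [Equiv.Perm.mem_support] at hx ⊢
          rwa [this] at hx
        ext y
        rw [mem_orbFinset, hcx, Equiv.Perm.mem_support_cycleOf_iff]
        exact ⟨fun h => ⟨h, hxs⟩, fun h => h.1⟩
  have hbigcard : (f.cycleFactorsFinset.image Equiv.Perm.support).card = f.cycleFactorsFinset.card := by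
    apply Finset.card_image_of_injOn
    intro c₁ h₁ c₂ h₂ hsup
    obtain ⟨x, hx⟩ := (Equiv.Perm.mem_cycleFactorsFinset_iff.mp h₁).1.nonempty_support
    have hx₂ : x ∈ c₂.support := by rw [← hsup]; exact hx
    rw [Equiv.Perm.cycle_is_cycleOf hx h₁, Equiv.Perm.cycle_is_cycleOf hx₂ h₂]
  have hdisj : Disjoint (f.support.image (orbFinset f)) (f.supportᶜ.image (orbFinset f)) := by
    rw [Finset.disjoint_left]
    rintro s hs hs'
    rw [Finset.mem_image] at hs hs'
    obtain ⟨x, hx, rfl⟩ := hs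
    obtain ⟨y, hy, hyx⟩ := hs'
    simp only [Finset.mem_compl, Equiv.Perm.mem_support, not_not] at hy
    have h1 : y ∈ orbFinset f x := by rw [← hyx]; exact mem_orb_self f y
    have h2 : orbFinset f y = orbFinset f x := orb_eq_of_mem h1
    rw [orb_fixed hy] at h2
    have hfx : f x ∈ orbFinset f x := mem_orbFinset.mpr ⟨1, by simp⟩
    have hxx : x ∈ orbFinset f x := mem_orb_self f x
    rw [← h2, mem_singleton] at hfx hxx
    rw [Equiv.Perm.mem_support] at hx
    exact hx (by rw [hfx, hxx])
  have hctc : f.cycleType.card = f.cycleFactorsFinset.card := by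
    rw [Equiv.Perm.cycleType_def, Multiset.card_map]
    rfl
  have hfixc : (univ.filter fun x => f x = x).card = f.supportᶜ.card := by
    congr 1
    ext x
    simp [Equiv.Perm.mem_support]
  rw [numOrbits, himage, Finset.card_union_of_disjoint hdisj, numCycles, hbigset, hbigcard,
    hsmallcard, hctc, hfixc]

lemma numOrbits_one : numOrbits (1 : Equiv.Perm (Fin n)) = n := by
  have : ∀ x : Fin n, orbFinset (1 : Equiv.Perm (Fin n)) x = {x} := fun x => orb_fixed rfl
  rw [numOrbits]
  rw [Finset.image_congr (fun x _ => this x)]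
  rw [Finset.card_image_of_injective _ (fun a b hab => by simpa using hab)]
  simp

section CountStep

variable {g : Fin n} {ρ ρ' : Equiv.Perm (Fin n)}

def Aset (g : Fin n) (f : Equiv.Perm (Fin n)) : Finset (Finset (Fin n)) :=
  (univ.image (orbFinset f)).filter (fun s => (0 : Fin n) ∉ s ∧ g ∉ s)

lemma orb_eq_orb (h : ρ' = Equiv.swap 0 g * ρ) {x : Fin n}
    (hx : (0 : Fin n) ∉ orbFinset ρ x) (hgx : g ∉ orbFinset ρ x) :
    orbFinset ρ' x = orbFinset ρ x := by
  have hav : ∀ y, ρ.SameCycle x y → y ≠ 0 ∧ y ≠ g := by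
    intro y hy
    constructor
    · rintro rfl; exact hx (mem_orbFinset.mpr hy)
    · rintro rfl; exact hgx (mem_orbFinset.mpr hy)
  ext y
  rw [mem_orbFinset, mem_orbFinset]
  exact (OC1 h hav y).symm

lemma Aset_eq (h : ρ' = Equiv.swap 0 g * ρ) : Aset g ρ = Aset g ρ' := by
  have key : ∀ (σ σ' : Equiv.Perm (Fin n)), σ' = Equiv.swap 0 g * σ →
      Aset g σ ⊆ Aset g σ' := by
    intro σ σ' hσ s hs
    simp only [Aset, Finset.mem_filter, Finset.mem_image] at hs ⊢
    obtain ⟨⟨x, _, rfl⟩, h0, hg0⟩ := hs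
    have := orb_eq_orb hσ h0 hg0
    exact ⟨⟨x, Finset.mem_univ x, this⟩, h0, hg0⟩
  exact subset_antisymm (key ρ ρ' h) (key ρ' ρ (role_swap h))

lemma image_orb_eq (f : Equiv.Perm (Fin n)) (g : Fin n) :
    univ.image (orbFinset f) = Aset g f ∪ {orbFinset f 0, orbFinset f g} := by
  ext s
  simp only [Aset, Finset.mem_union, Finset.mem_filter, Finset.mem_insert, Finset.mem_singleton,
    Finset.mem_image]
  constructor
  · rintro ⟨x, _, rfl⟩
    by_cases h0 : (0 : Fin n) ∈ orbFinset f x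
    · exact Or.inr (Or.inl (orb_eq_of_mem h0).symm)
    by_cases hgg : g ∈ orbFinset f x
    · exact Or.inr (Or.inr (orb_eq_of_mem hgg).symm)
    · exact Or.inl ⟨⟨x, Finset.mem_univ x, rfl⟩, h0, hgg⟩
  · rintro (⟨hs, _, _⟩ | h | h)
    · exact hs
    · exact ⟨0, Finset.mem_univ _, h.symm⟩
    · exact ⟨g, Finset.mem_univ _, h.symm⟩

lemma count_split (hg : g ≠ 0) (hs : ρ.SameCycle 0 g) (h : ρ' = Equiv.swap 0 g * ρ) :
    numOrbits ρ' = numOrbits ρ + 1 := by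
  classical
  have horb : orbFinset ρ g = orbFinset ρ 0 := orb_eq_of_mem (mem_orbFinset.mpr hs)
  have hone : ({orbFinset ρ 0, orbFinset ρ g} : Finset (Finset (Fin n))) = {orbFinset ρ 0} := by
    rw [horb]; simp
  have hne : orbFinset ρ' 0 ≠ orbFinset ρ' g := by
    intro heq
    have : g ∈ orbFinset ρ' 0 := by rw [heq]; exact mem_orb_self _ _
    exact OC4 hg hs h (mem_orbFinset.mp this)
  have hd1 : Disjoint (Aset g ρ) ({orbFinset ρ 0} : Finset (Finset (Fin n))) := by
    rw [Finset.disjoint_right]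
    intro s hsm hsa
    rw [Finset.mem_singleton] at hsm
    simp only [Aset, Finset.mem_filter] at hsa
    exact hsa.2.1 (by rw [hsm]; exact mem_orb_self _ _)
  have hd2 : Disjoint (Aset g ρ') ({orbFinset ρ' 0, orbFinset ρ' g} : Finset (Finset (Fin n))) := by
    rw [Finset.disjoint_right]
    intro s hsm hsa
    simp only [Finset.mem_insert, Finset.mem_singleton] at hsm
    simp only [Aset, Finset.mem_filter] at hsa
    rcases hsm with rfl | rfl
    · exact hsa.2.1 (mem_orb_self _ _)
    · exact hsa.2.2 (mem_orb_self _ _)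
  have c1 : numOrbits ρ = (Aset g ρ).card + 1 := by
    rw [numOrbits, image_orb_eq ρ g, hone, Finset.card_union_of_disjoint hd1,
      Finset.card_singleton]
  have c2 : numOrbits ρ' = (Aset g ρ').card + 2 := by
    rw [numOrbits, image_orb_eq ρ' g, Finset.card_union_of_disjoint hd2]
    congr 1
    rw [Finset.card_insert_of_notMem (by simpa using hne), Finset.card_singleton]
  rw [c1, c2, ← Aset_eq h]

lemma count_merge (hg : g ≠ 0) (hm : ¬ρ.SameCycle 0 g) (h : ρ' = Equiv.swap 0 g * ρ) :
    numOrbits ρ' + 1 = numOrbits ρ := by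
  have h' : ρ = Equiv.swap 0 g * ρ' := role_swap h
  have hs' : ρ'.SameCycle 0 g := L4b hg hm h
  rw [count_split hg hs' h']

end CountStep

end Count

section Main

variable {π : Equiv.Perm (Fin n)} {l : List (Equiv.Perm (Fin n))}

/-- suffix product: `R l t = τ_t τ_{t+1} ⋯`. -/
def R (l : List (Equiv.Perm (Fin n))) (t : ℕ) : Equiv.Perm (Fin n) := (l.drop t).prod

/-- the letter at position `t`. -/
def wf (l : List (Equiv.Perm (Fin n))) (t : ℕ) : Fin n := (R l t * (R l (t+1))⁻¹) 0

lemma R_of_le {t : ℕ} (h : l.length ≤ t) : R l t = 1 := by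
  rw [R, List.drop_eq_nil_of_le h, List.prod_nil]

lemma R_step (hstar : IsStarList l) {t : ℕ} (ht : t < l.length) :
    R l t = Equiv.swap 0 (wf l t) * R l (t+1) ∧ wf l t ≠ 0 := by
  obtain ⟨i, hi0, hsw⟩ := hstar (l[t]'ht) (List.getElem_mem ht)
  have hd : R l t = l[t]'ht * R l (t+1) := by
    rw [R, R, List.drop_eq_getElem_cons ht, List.prod_cons]
  have hw : wf l t = i := by
    rw [wf, hd, hsw, mul_inv_cancel_right, Equiv.swap_apply_left]
  rw [hw, hd, hsw]
  exact ⟨rfl, hi0⟩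

/-- split step -/
def isSplit (l : List (Equiv.Perm (Fin n))) (t : ℕ) : Prop :=
  (R l (t+1)).SameCycle 0 (wf l t)

open scoped Classical in
/-- number of splits in `[t, length)` -/
noncomputable def spc (l : List (Equiv.Perm (Fin n))) (t : ℕ) : ℕ :=
  ((Finset.Ico t l.length).filter (isSplit l)).card

open scoped Classical in
lemma spc_succ {t : ℕ} (ht : t < l.length) :
    spc l t = spc l (t+1) + (if isSplit l t then 1 else 0) := by
  classical
  have : Finset.Ico t l.length = insert t (Finset.Ico (t+1) l.length) :=
    (Finset.insert_Ico_add_one_left_eq_Ico ht).symm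
  rw [spc, spc, this, Finset.filter_insert]
  by_cases hsp : isSplit l t
  · rw [if_pos hsp, if_pos hsp, Finset.card_insert_of_notMem (by simp)]
  · rw [if_neg hsp, if_neg hsp]
    omega

lemma telescope (hstar : IsStarList l) :
    ∀ k t, l.length - t = k → t ≤ l.length →
      numOrbits (R l t) + (l.length - t) = n + 2 * spc l t := by
  intro k
  induction k with
  | zero =>
    intro t hk htle
    have : t = l.length := by omega
    subst this
    rw [R_of_le le_rfl, numOrbits_one, spc, Finset.Ico_self, Finset.filter_empty]
    simp
  | succ k ih =>
    intro t hk htle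
    have ht : t < l.length := by omega
    have hstep := R_step hstar ht
    have ih' := ih (t+1) (by omega) (by omega)
    rw [spc_succ ht]
    by_cases hsp : isSplit l t
    · have hcnt := count_split hstep.2 hsp hstep.1
      rw [if_pos hsp]
      omega
    · have hcnt := count_merge hstep.2 hsp hstep.1
      rw [if_neg hsp]
      omega

lemma getElem_eq (hstar : IsStarList l) {t : ℕ} (ht : t < l.length) :
    l[t]'ht = Equiv.swap 0 (wf l t) := by
  obtain ⟨i, hi0, hsw⟩ := hstar (l[t]'ht) (List.getElem_mem ht)
  have hd : R l t = l[t]'ht * R l (t+1) := by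
    rw [R, R, List.drop_eq_getElem_cons ht, List.prod_cons]
  have hw : wf l t = i := by
    rw [wf, hd, hsw, mul_inv_cancel_right, Equiv.swap_apply_left]
  rw [hw, hsw]

lemma occurs (hstar : IsStarList l) (htrans : IsTransitiveList l) {x : Fin n} (hx : x ≠ 0) :
    ∃ t, ∃ _ : t < l.length, wf l t = x := by
  by_contra hcon
  push_neg at hcon
  have hfix : ∀ τ ∈ l, τ x = x := by
    intro τ hτ
    obtain ⟨t, ht, hτt⟩ := List.mem_iff_getElem.mp hτ
    rw [← hτt, getElem_eq hstar ht]
    exact Equiv.swap_apply_of_ne_of_ne hx (fun hh => hcon t ht (by rw [← hh]))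
  have hcl : ∀ g ∈ Subgroup.closure {τ | τ ∈ l}, g x = x := by
    intro g hg
    induction hg using Subgroup.closure_induction with
    | mem τ hτ => exact hfix τ hτ
    | one => rfl
    | mul a b _ _ ha hb => rw [Equiv.Perm.mul_apply, hb, ha]
    | inv a _ ha =>
      nth_rewrite 1 [← ha]
      exact Equiv.symm_apply_apply a x
  obtain ⟨g, hgmem, hgx⟩ := htrans x 0
  exact hx (by rw [← hcl g hgmem, hgx])

/-- The persistence predicate: the cycle of `x` agrees with its final cycle at all times `≤ t`. -/
def Pp (π : Equiv.Perm (Fin n)) (l : List (Equiv.Perm (Fin n))) (x : Fin n) (t : ℕ) : Prop :=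
  ∀ s ≤ t, ∀ y, ((R l s).SameCycle x y ↔ π.SameCycle x y)

open scoped Classical in
/-- Creation time of the cycle of `x`. -/
noncomputable def Tt (π : Equiv.Perm (Fin n)) (l : List (Equiv.Perm (Fin n))) (x : Fin n) : ℕ :=
  Nat.findGreatest (Pp π l x) l.length

lemma Pp_zero (hprod : l.prod = π) (x : Fin n) : Pp π l x 0 := by
  intro s hs y
  interval_cases s
  rw [show R l 0 = π by rw [R, List.drop_zero, hprod]]

open scoped Classical in
lemma Pp_T (hprod : l.prod = π) (x : Fin n) : Pp π l x (Tt π l x) :=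
  Nat.findGreatest_spec (Nat.zero_le _) (Pp_zero hprod x)

lemma Tt_const (hprod : l.prod = π) {x x' : Fin n} (hxy : π.SameCycle x x') :
    Tt π l x = Tt π l x' := by
  classical
  have transfer : ∀ (u u' : Fin n), π.SameCycle u u' → ∀ t, Pp π l u t → Pp π l u' t := by
    intro u u' huv t hP s hs y
    have huu' : (R l s).SameCycle u u' := (hP s hs u').mpr huv
    constructor
    · intro h
      exact huv.symm.trans ((hP s hs y).mp (huu'.trans h))
    · intro h
      exact huu'.symm.trans ((hP s hs y).mpr (huv.trans h))
  apply le_antisymm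
  · exact Nat.le_findGreatest (Nat.findGreatest_le _) (transfer x x' hxy _ (Pp_T hprod x))
  · exact Nat.le_findGreatest (Nat.findGreatest_le _) (transfer x' x hxy.symm _ (Pp_T hprod x'))

lemma Tt_spec (hstar : IsStarList l) (hprod : l.prod = π) (htrans : IsTransitiveList l)
    {x : Fin n} (hx : x ≠ 0) (hx0 : ¬π.SameCycle 0 x) :
    Tt π l x < l.length ∧
    isSplit l (Tt π l x) ∧
    π.SameCycle (wf l (Tt π l x)) x ∧
    (R l (Tt π l x + 1)).SameCycle 0 x := by
  classical
  have hP : Pp π l x (Tt π l x) := Pp_T hprod x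
  have hnotr : ¬ Pp π l x l.length := by
    obtain ⟨t, ht, hw⟩ := occurs hstar htrans hx
    intro hPr
    have hstep := R_step hstar ht
    by_cases hsp : isSplit l t
    · rw [isSplit, hw] at hsp
      exact hx0 ((hPr (t+1) (by omega) 0).mp hsp.symm).symm
    · have hm1 := L4b hstep.2 hsp hstep.1
      rw [hw] at hm1
      exact hx0 ((hPr t (le_of_lt ht) 0).mp hm1.symm).symm
  have hTle : Tt π l x ≤ l.length := Nat.findGreatest_le _
  have hTlt : Tt π l x < l.length := by
    rcases lt_or_eq_of_le hTle with h | h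
    · exact h
    · exact absurd (h ▸ hP) hnotr
  have hnot : ¬ Pp π l x (Tt π l x + 1) :=
    Nat.findGreatest_is_greatest (Nat.lt_succ_self _) (by omega)
  have hfail : ∃ y, ¬(((R l (Tt π l x + 1)).SameCycle x y) ↔ π.SameCycle x y) := by
    by_contra hcon
    push_neg at hcon
    apply hnot
    intro s hs y
    rcases Nat.lt_or_ge s (Tt π l x + 1) with h | h
    · exact hP s (by omega) y
    · have : s = Tt π l x + 1 := by omega
      subst this
      exact hcon y
  obtain ⟨y0, hy0⟩ := hfail
  have hstep := R_step hstar hTlt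
  have hmeet : (R l (Tt π l x + 1)).SameCycle x 0 ∨
      (R l (Tt π l x + 1)).SameCycle x (wf l (Tt π l x)) := by
    by_contra hcon
    push_neg at hcon
    have hav : ∀ y, (R l (Tt π l x + 1)).SameCycle x y → y ≠ 0 ∧ y ≠ wf l (Tt π l x) := by
      intro y hy
      constructor
      · rintro rfl; exact hcon.1 hy
      · rintro rfl; exact hcon.2 hy
    apply hy0
    rw [(OC1 hstep.1 hav y0).symm.symm]
    exact hP _ le_rfl y0
  have hsplit : isSplit l (Tt π l x) := by
    by_contra hmrg
    have hzx : (R l (Tt π l x)).SameCycle 0 x := by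
      rcases hmeet with h | h
      · exact L4c hstep.2 hmrg hstep.1 x h.symm
      · exact L4e hstep.2 hmrg hstep.1 x h.symm
    exact hx0 ((hP _ le_rfl 0).mp hzx.symm).symm
  have hZ : (R l (Tt π l x + 1)).SameCycle 0 x := by
    rcases hmeet with h | h
    · exact h.symm
    · exact hsplit.trans h.symm
  have hwx : π.SameCycle (wf l (Tt π l x)) x := by
    rcases (S2 hstep.2 hsplit hstep.1 x).mp hZ with h | h
    · exact absurd ((hP _ le_rfl 0).mp h.symm).symm hx0
    · exact (((hP _ le_rfl _).mp h.symm).symm : π.SameCycle (wf l (Tt π l x)) x)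
  exact ⟨hTlt, hsplit, hwx, hZ⟩

lemma numOrbits_pos (f : Equiv.Perm (Fin n)) : 1 ≤ numOrbits f := by
  rw [numOrbits]
  exact Finset.card_pos.mpr ⟨orbFinset f 0, Finset.mem_image_of_mem _ (Finset.mem_univ 0)⟩

lemma spc_card (hstar : IsStarList l) (hprod : l.prod = π)
    (hlen : l.length = n + numCycles π - 2) :
    spc l 0 + 1 = numCycles π := by
  have htel := telescope hstar (l.length - 0) 0 rfl (Nat.zero_le _)
  rw [show R l 0 = π by rw [R, List.drop_zero, hprod], numOrbits_eq_numCycles] at htel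
  have h1 : 1 ≤ numCycles π := by
    rw [← numOrbits_eq_numCycles]; exact numOrbits_pos π
  have h2 : 1 ≤ n := Nat.pos_of_ne_zero (NeZero.ne n)
  omega

open scoped Classical in
lemma split_surj (hstar : IsStarList l) (hprod : l.prod = π) (htrans : IsTransitiveList l)
    (hlen : l.length = n + numCycles π - 2) {t : ℕ} (ht : t < l.length) (hsp : isSplit l t) :
    ∃ x, x ≠ 0 ∧ ¬π.SameCycle 0 x ∧ Tt π l x = t := by
  classical
  set D := (univ.image (orbFinset π)).filter (fun s => (0 : Fin n) ∉ s) with hD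
  set Sp := (Finset.Ico 0 l.length).filter (isSplit l) with hSp
  -- properties of the min of a member of D
  have hmem : ∀ s ∈ D, ∀ hne : s.Nonempty,
      s.min' hne ≠ 0 ∧ ¬π.SameCycle 0 (s.min' hne) ∧ orbFinset π (s.min' hne) = s := by
    intro s hs hne
    rw [hD, Finset.mem_filter, Finset.mem_image] at hs
    obtain ⟨⟨x₀, _, rfl⟩, h0⟩ := hs
    have hmm := Finset.min'_mem _ hne
    have horb : orbFinset π (_) = orbFinset π x₀ := orb_eq_of_mem hmm
    refine ⟨?_, ?_, horb⟩
    · rintro hq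
      exact h0 (by rw [← hq]; exact hmm)
    · intro hq
      apply h0
      rw [mem_orbFinset] at hmm ⊢
      exact hmm.trans hq.symm
  have hDne : ∀ s ∈ D, s.Nonempty := by
    intro s hs
    rw [hD, Finset.mem_filter, Finset.mem_image] at hs
    obtain ⟨⟨x₀, _, rfl⟩, _⟩ := hs
    exact ⟨x₀, mem_orb_self _ _⟩
  set F : Finset (Fin n) → ℕ := fun s => if h : s.Nonempty then Tt π l (s.min' h) else 0 with hF
  have hmaps : ∀ s ∈ D, F s ∈ Sp := by
    intro s hs
    have hne := hDne s hs
    obtain ⟨hne0, hfree, _⟩ := hmem s hs hne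
    obtain ⟨hlt, hspl, _, _⟩ := Tt_spec hstar hprod htrans hne0 hfree
    rw [hF]
    simp only [dif_pos hne]
    rw [hSp, Finset.mem_filter, Finset.mem_Ico]
    exact ⟨⟨Nat.zero_le _, hlt⟩, hspl⟩
  have hinj : Set.InjOn F D := by
    intro s hs s' hs' heq
    have hne := hDne s hs
    have hne' := hDne s' hs'
    obtain ⟨hne0, hfree, horb⟩ := hmem s hs hne
    obtain ⟨hne0', hfree', horb'⟩ := hmem s' hs' hne'
    obtain ⟨_, _, hwc, _⟩ := Tt_spec hstar hprod htrans hne0 hfree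
    obtain ⟨_, _, hwc', _⟩ := Tt_spec hstar hprod htrans hne0' hfree'
    rw [hF] at heq
    simp only [dif_pos hne, dif_pos hne'] at heq
    rw [heq] at hwc
    have hsame : π.SameCycle (s.min' hne) (s'.min' hne') := hwc.symm.trans hwc'
    rw [← horb, ← horb']
    exact orb_eq_of_mem (mem_orbFinset.mpr hsame.symm)
  have hDcard : D.card + 1 = numOrbits π := by
    have himg : univ.image (orbFinset π) = D ∪ {orbFinset π 0} := by
      ext s
      rw [Finset.mem_union, hD, Finset.mem_filter, Finset.mem_singleton]
      constructor
      · intro hs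
        by_cases h0 : (0 : Fin n) ∈ s
        · rw [Finset.mem_image] at hs
          obtain ⟨x₀, _, rfl⟩ := hs
          exact Or.inr (orb_eq_of_mem h0).symm
        · exact Or.inl ⟨hs, h0⟩
      · rintro (⟨hs, _⟩ | rfl)
        · exact hs
        · exact Finset.mem_image_of_mem _ (Finset.mem_univ 0)
    have hdisj : Disjoint D ({orbFinset π 0} : Finset (Finset (Fin n))) := by
      rw [Finset.disjoint_right]
      intro s hsm hsd
      rw [Finset.mem_singleton] at hsm
      rw [hD, Finset.mem_filter] at hsd
      exact hsd.2 (by rw [hsm]; exact mem_orb_self _ _)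
    rw [numOrbits, himg, Finset.card_union_of_disjoint hdisj, Finset.card_singleton]
  have hSpcard : Sp.card = spc l 0 := rfl
  have hcard : D.card = Sp.card := by
    have := spc_card hstar hprod hlen
    rw [← numOrbits_eq_numCycles] at this
    omega
  have himg_eq : D.image F = Sp := by
    apply Finset.eq_of_subset_of_card_le
    · intro u hu
      rw [Finset.mem_image] at hu
      obtain ⟨s, hs, rfl⟩ := hu
      exact hmaps s hs
    · rw [Finset.card_image_of_injOn hinj, hcard]
  have htin : t ∈ Sp := by
    rw [hSp, Finset.mem_filter, Finset.mem_Ico]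
    exact ⟨⟨Nat.zero_le _, ht⟩, hsp⟩
  rw [← himg_eq, Finset.mem_image] at htin
  obtain ⟨s, hs, hst⟩ := htin
  have hne := hDne s hs
  obtain ⟨hne0, hfree, _⟩ := hmem s hs hne
  rw [hF] at hst
  simp only [dif_pos hne] at hst
  exact ⟨s.min' hne, hne0, hfree, hst⟩

lemma sameCycle_of_fixed {f : Equiv.Perm (Fin n)} {x y : Fin n} (hfx : f x = x) :
    f.SameCycle x y ↔ y = x := by
  rw [← mem_orbFinset, orb_fixed hfx, Finset.mem_singleton]

lemma not_Z_below (hprod : l.prod = π) {x : Fin n} (hfree : ¬π.SameCycle 0 x) :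
    ∀ s ≤ Tt π l x, ¬(R l s).SameCycle 0 x := by
  intro s hs hZ
  exact hfree (((Pp_T hprod x) s hs 0).mp hZ.symm).symm

lemma Z_lt {t : ℕ} {x : Fin n} (hx : x ≠ 0) (hZ : (R l t).SameCycle 0 x) : t < l.length := by
  by_contra hcon
  push_neg at hcon
  rw [R_of_le hcon, Equiv.Perm.sameCycle_one] at hZ
  exact hx hZ.symm

lemma orb_struct (hstar : IsStarList l) (hprod : l.prod = π) (htrans : IsTransitiveList l)
    (hlen : l.length = n + numCycles π - 2) :
    ∀ k t, l.length - t = k → ∀ x : Fin n, x ≠ 0 → ¬(R l t).SameCycle 0 x →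
      ((R l t) x = x ∨ (¬π.SameCycle 0 x ∧ t ≤ Tt π l x)) := by
  intro k
  induction k with
  | zero =>
    intro t hk x hx _
    rw [R_of_le (by omega)]
    exact Or.inl rfl
  | succ k ih =>
    intro t hk x hx hnZ
    have ht : t < l.length := by omega
    have hstep := R_step hstar ht
    by_cases hfix : (R l t) x = x
    · exact Or.inl hfix
    by_cases hmeet : (R l (t+1)).SameCycle x 0 ∨ (R l (t+1)).SameCycle x (wf l t)
    · by_cases hsp : isSplit l t
      · obtain ⟨x', hx'0, hx'f, hTx'⟩ := split_surj hstar hprod htrans hlen ht hsp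
        have hP' := Pp_T hprod x'
        rw [hTx'] at hP'
        have hx0ρ : (R l (t+1)).SameCycle 0 x := by
          rcases hmeet with h | h
          · exact h.symm
          · exact hsp.trans h.symm
        have h2 : (R l t).SameCycle (wf l t) x := by
          rcases (S2 hstep.2 hsp hstep.1 x).mp hx0ρ with h | h
          · exact absurd h hnZ
          · exact h
        obtain ⟨_, _, hwc, _⟩ := Tt_spec hstar hprod htrans hx'0 hx'f
        rw [hTx'] at hwc
        have h3 : (R l t).SameCycle x' (wf l t) := (hP' t le_rfl (wf l t)).mpr hwc.symm
        have h4 : π.SameCycle x' x := (hP' t le_rfl x).mp (h3.trans h2)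
        refine Or.inr ⟨?_, ?_⟩
        · intro hq
          exact hx'f (hq.trans h4.symm)
        · rw [Tt_const hprod h4.symm, hTx']
      · exfalso
        rcases hmeet with h | h
        · exact hnZ (L4c hstep.2 hsp hstep.1 x h.symm)
        · exact hnZ (L4e hstep.2 hsp hstep.1 x h.symm)
    · push_neg at hmeet
      have hav : ∀ y, (R l (t+1)).SameCycle x y → y ≠ 0 ∧ y ≠ wf l t := by
        intro y hy
        constructor
        · rintro rfl; exact hmeet.1 hy
        · rintro rfl; exact hmeet.2 hy
      have happ : (R l t) x = (R l (t+1)) x := by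
        rw [hstep.1, Equiv.Perm.mul_apply]
        have := hav ((R l (t+1)) x) ⟨1, by simp⟩
        exact Equiv.swap_apply_of_ne_of_ne this.1 this.2
      have hnZ1 : ¬(R l (t+1)).SameCycle 0 x := by
        intro hq
        exact (hav 0 ((hq.symm.trans (Equiv.Perm.SameCycle.refl _ 0)))).1 rfl
      rcases ih (t+1) (by omega) x hx hnZ1 with h | h
      · exact absurd (happ.trans h) hfix
      · exact Or.inr ⟨h.1, by omega⟩

lemma merge_fixed (hstar : IsStarList l) (hprod : l.prod = π) (htrans : IsTransitiveList l)
    (hlen : l.length = n + numCycles π - 2) {t : ℕ} (ht : t < l.length)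
    (hm : ¬isSplit l t) : (R l (t+1)) (wf l t) = wf l t := by
  have hstep := R_step hstar ht
  rcases orb_struct hstar hprod htrans hlen (l.length - (t+1)) (t+1) rfl (wf l t) hstep.2 hm
    with h | h
  · exact h
  · exfalso
    have hZ : (R l t).SameCycle 0 (wf l t) := L4b hstep.2 hm hstep.1
    exact not_Z_below hprod h.1 t (by omega) hZ

lemma Z_merge (hstar : IsStarList l) (hprod : l.prod = π) (htrans : IsTransitiveList l)
    (hlen : l.length = n + numCycles π - 2) {t : ℕ} (ht : t < l.length)
    (hm : ¬isSplit l t) (x : Fin n) :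
    (R l t).SameCycle 0 x ↔ ((R l (t+1)).SameCycle 0 x ∨ x = wf l t) := by
  have hstep := R_step hstar ht
  rw [M2 hstep.2 hm hstep.1 x]
  constructor
  · rintro (h | h)
    · exact Or.inl h
    · exact Or.inr ((sameCycle_of_fixed (merge_fixed hstar hprod htrans hlen ht hm)).mp h)
  · rintro (h | h)
    · exact Or.inl h
    · exact Or.inr (h ▸ Equiv.Perm.SameCycle.refl _ _)

/-- entry point of the interval of x -/
noncomputable def oo (π : Equiv.Perm (Fin n)) (l : List (Equiv.Perm (Fin n))) (x : Fin n) : ℕ :=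
  if π.SameCycle 0 x then 0 else Tt π l x + 1

open scoped Classical in
/-- exit (entry time, largest time in 0-cycle) of x -/
noncomputable def Ee (π : Equiv.Perm (Fin n)) (l : List (Equiv.Perm (Fin n))) (x : Fin n) : ℕ :=
  Nat.findGreatest (fun t => (R l t).SameCycle 0 x) l.length

lemma step_down (hstar : IsStarList l) (hprod : l.prod = π) (htrans : IsTransitiveList l)
    (hlen : l.length = n + numCycles π - 2) {x : Fin n} (hx : x ≠ 0) {t : ℕ}
    (hoo : oo π l x ≤ t) (hZ : (R l (t+1)).SameCycle 0 x) : (R l t).SameCycle 0 x := by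
  have ht : t < l.length := by
    have := Z_lt hx hZ
    omega
  have hstep := R_step hstar ht
  by_cases hsp : isSplit l t
  · rcases (S2 hstep.2 hsp hstep.1 x).mp hZ with h | h
    · exact h
    · exfalso
      obtain ⟨x', hx'0, hx'f, hTx'⟩ := split_surj hstar hprod htrans hlen ht hsp
      have hP' := Pp_T hprod x'
      rw [hTx'] at hP'
      obtain ⟨_, _, hwc, _⟩ := Tt_spec hstar hprod htrans hx'0 hx'f
      rw [hTx'] at hwc
      have h3 : (R l t).SameCycle x' (wf l t) := (hP' t le_rfl (wf l t)).mpr hwc.symm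
      have h4 : π.SameCycle x' x := (hP' t le_rfl x).mp (h3.trans h)
      have hxfree : ¬π.SameCycle 0 x := fun hq => hx'f (hq.trans h4.symm)
      have : oo π l x = Tt π l x + 1 := by rw [oo, if_neg hxfree]
      rw [this, Tt_const hprod h4.symm, hTx'] at hoo
      omega
  · exact (Z_merge hstar hprod htrans hlen ht hsp x).mpr (Or.inl hZ)

lemma Z_between (hstar : IsStarList l) (hprod : l.prod = π) (htrans : IsTransitiveList l)
    (hlen : l.length = n + numCycles π - 2) {x : Fin n} (hx : x ≠ 0) :
    ∀ (d s : ℕ), oo π l x ≤ s → (R l (s + d)).SameCycle 0 x → (R l s).SameCycle 0 x := by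
  intro d
  induction d with
  | zero => intro s _ h; exact h
  | succ d ih =>
    intro s hs h
    have hZ : (R l (s + d)).SameCycle 0 x :=
      step_down hstar hprod htrans hlen hx (by omega) (by rw [show s + d + 1 = s + (d+1) by omega]; exact h)
    exact ih s hs hZ

open scoped Classical in
lemma E_mem (π : Equiv.Perm (Fin n)) {x : Fin n} {t : ℕ} (hx : x ≠ 0)
    (h : (R l t).SameCycle 0 x) : t ≤ Ee π l x := by
  rw [Ee]
  exact Nat.le_findGreatest (P := fun t => (R l t).SameCycle 0 x) (le_of_lt (Z_lt hx h)) h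

open scoped Classical in
lemma E_Z (π : Equiv.Perm (Fin n)) {x : Fin n} {s : ℕ} (hx : x ≠ 0)
    (h : (R l s).SameCycle 0 x) : (R l (Ee π l x)).SameCycle 0 x := by
  rw [Ee]
  exact Nat.findGreatest_spec (P := fun t => (R l t).SameCycle 0 x) (le_of_lt (Z_lt hx h)) h

lemma oo_le (hprod : l.prod = π) {x : Fin n} {t : ℕ} (h : (R l t).SameCycle 0 x) :
    oo π l x ≤ t := by
  rw [oo]
  by_cases hfree : π.SameCycle 0 x
  · rw [if_pos hfree]; omega
  · rw [if_neg hfree]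
    by_contra hcon
    exact not_Z_below hprod hfree t (by omega) h

lemma Z_at (hstar : IsStarList l) (hprod : l.prod = π) (htrans : IsTransitiveList l)
    (hlen : l.length = n + numCycles π - 2) {x : Fin n} {s t : ℕ} (hx : x ≠ 0)
    (hne : (R l s).SameCycle 0 x) (h1 : oo π l x ≤ t) (h2 : t ≤ Ee π l x) :
    (R l t).SameCycle 0 x := by
  have hE := E_Z π hx hne
  have : t + (Ee π l x - t) = Ee π l x := by omega
  exact Z_between hstar hprod htrans hlen hx (Ee π l x - t) t h1 (by rw [this]; exact hE)

lemma entry_merge (hstar : IsStarList l) (hprod : l.prod = π) (htrans : IsTransitiveList l)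
    (hlen : l.length = n + numCycles π - 2) {x : Fin n} {s : ℕ} (hx : x ≠ 0)
    (hne : (R l s).SameCycle 0 x) :
    ¬isSplit l (Ee π l x) ∧ wf l (Ee π l x) = x ∧ Ee π l x < l.length := by
  have hE := E_Z π hx hne
  have hlt : Ee π l x < l.length := Z_lt hx hE
  have hstep := R_step hstar hlt
  have hnZ1 : ¬(R l (Ee π l x + 1)).SameCycle 0 x := by
    intro h
    have := E_mem π hx h
    omega
  by_cases hsp : isSplit l (Ee π l x)
  · exact absurd ((S2 hstep.2 hsp hstep.1 x).mpr (Or.inl hE)) hnZ1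
  · rcases (Z_merge hstar hprod htrans hlen hlt hsp x).mp hE with h | h
    · exact absurd h hnZ1
    · exact ⟨hsp, h.symm, hlt⟩

lemma merge_E (hstar : IsStarList l) (hprod : l.prod = π) (htrans : IsTransitiveList l)
    (hlen : l.length = n + numCycles π - 2) {t : ℕ} (ht : t < l.length)
    (hm : ¬isSplit l t) : Ee π l (wf l t) = t := by
  have hstep := R_step hstar ht
  have hZt : (R l t).SameCycle 0 (wf l t) := L4b hstep.2 hm hstep.1
  have hle : t ≤ Ee π l (wf l t) := E_mem π hstep.2 hZt
  rcases eq_or_lt_of_le hle with h | h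
  · exact h.symm
  · exfalso
    exact hm (Z_at hstar hprod htrans hlen hstep.2 hZt
      (le_trans (oo_le hprod hZt) (by omega)) (by omega))

lemma occ_ge_T (hstar : IsStarList l) (hprod : l.prod = π) (htrans : IsTransitiveList l)
    {x : Fin n} (hx0 : ¬π.SameCycle 0 x) {s : ℕ} (hs : s < l.length)
    (hws : π.SameCycle x (wf l s)) : Tt π l x ≤ s := by
  have hstep := R_step hstar hs
  have hgfree : ¬π.SameCycle 0 (wf l s) := fun hq => hx0 (hq.trans hws.symm)
  have hTconst : Tt π l x = Tt π l (wf l s) := Tt_const hprod hws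
  by_contra hcon
  push_neg at hcon
  by_cases hsp : isSplit l s
  · exact not_Z_below hprod hgfree (s+1) (by omega) hsp
  · exact not_Z_below hprod hgfree s (by omega) (L4b hstep.2 hsp hstep.1)

lemma occ_merge (hstar : IsStarList l) (hprod : l.prod = π) (htrans : IsTransitiveList l)
    (hlen : l.length = n + numCycles π - 2) {x : Fin n} (hx : x ≠ 0)
    (hx0 : ¬π.SameCycle 0 x) {s : ℕ} (hs : s < l.length)
    (hws : π.SameCycle x (wf l s)) (hsne : s ≠ Tt π l x) :
    Ee π l (wf l s) = s ∧ oo π l (wf l s) = Tt π l x + 1 ∧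
      (R l s).SameCycle 0 (wf l s) := by
  have hstep := R_step hstar hs
  have hgfree : ¬π.SameCycle 0 (wf l s) := fun hq => hx0 (hq.trans hws.symm)
  have hnsp : ¬isSplit l s := by
    intro hsp
    obtain ⟨x'', h0'', hf'', hT''⟩ := split_surj hstar hprod htrans hlen hs hsp
    obtain ⟨_, _, hwc, _⟩ := Tt_spec hstar hprod htrans h0'' hf''
    rw [hT''] at hwc
    have : π.SameCycle x x'' := hws.trans hwc
    rw [Tt_const hprod this, hT''] at hsne
    exact hsne rfl
  refine ⟨merge_E hstar hprod htrans hlen hs hnsp, ?_, L4b hstep.2 hnsp hstep.1⟩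
  rw [oo, if_neg hgfree, Tt_const hprod hws]

lemma occ0_merge (hstar : IsStarList l) (hprod : l.prod = π) (htrans : IsTransitiveList l)
    (hlen : l.length = n + numCycles π - 2) {s : ℕ} (hs : s < l.length)
    (hv0 : π.SameCycle 0 (wf l s)) :
    Ee π l (wf l s) = s ∧ oo π l (wf l s) = 0 ∧ (R l s).SameCycle 0 (wf l s) := by
  have hstep := R_step hstar hs
  have hnsp : ¬isSplit l s := by
    intro hsp
    obtain ⟨x'', h0'', hf'', hT''⟩ := split_surj hstar hprod htrans hlen hs hsp
    obtain ⟨_, _, hwc, _⟩ := Tt_spec hstar hprod htrans h0'' hf''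
    rw [hT''] at hwc
    exact hf'' (hv0.trans hwc)
  refine ⟨merge_E hstar hprod htrans hlen hs hnsp, ?_, L4b hstep.2 hnsp hstep.1⟩
  rw [oo, if_pos hv0]

lemma cyc (hstar : IsStarList l) (hprod : l.prod = π) (htrans : IsTransitiveList l)
    (hlen : l.length = n + numCycles π - 2) :
    ∀ k t, l.length - t = k → ∀ x : Fin n,
      (R l t).SameCycle 0 x → x ≠ 0 → (R l t) x ≠ 0 →
      Ee π l ((R l t) x) < Ee π l x := by
  intro k
  induction k with
  | zero =>
    intro t hk x hZ hx _
    exact absurd (Z_lt hx hZ) (by omega)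
  | succ k ih =>
    intro t hk x hZ hx hRx
    have ht : t < l.length := by omega
    have hstep := R_step hstar ht
    by_cases hsp : isSplit l t
    · have hZ1 : (R l (t+1)).SameCycle 0 x := (S2 hstep.2 hsp hstep.1 x).mpr (Or.inl hZ)
      have hnZw : ¬(R l t).SameCycle 0 (wf l t) := OC4 hstep.2 hsp hstep.1
      have happly : (R l t) x = Equiv.swap 0 (wf l t) ((R l (t+1)) x) := by
        rw [hstep.1, Equiv.Perm.mul_apply]
      rcases eq_or_ne ((R l (t+1)) x) (wf l t) with hyw | hyw
      · exact absurd (by rw [happly, hyw, Equiv.swap_apply_right]) hRx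
      rcases eq_or_ne ((R l (t+1)) x) 0 with hy0 | hy0
      · exfalso
        have heq : (R l t) x = wf l t := by rw [happly, hy0, Equiv.swap_apply_left]
        have hsc : (R l t).SameCycle 0 ((R l t) x) := hZ.trans ⟨1, by simp⟩
        rw [heq] at hsc
        exact hnZw hsc
      · have heq : (R l t) x = (R l (t+1)) x := by
          rw [happly, Equiv.swap_apply_of_ne_of_ne hy0 hyw]
        rw [heq]
        exact ih (t+1) (by omega) x hZ1 hx hy0
    · rcases eq_or_ne x (wf l t) with hxw | hxw
      · exfalso
        apply hRx
        rw [hstep.1, Equiv.Perm.mul_apply, hxw,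
          merge_fixed hstar hprod htrans hlen ht hsp, Equiv.swap_apply_right]
      have hZ1 : (R l (t+1)).SameCycle 0 x := by
        rcases (Z_merge hstar hprod htrans hlen ht hsp x).mp hZ with h | h
        · exact h
        · exact absurd h hxw
      have happly : (R l t) x = Equiv.swap 0 (wf l t) ((R l (t+1)) x) := by
        rw [hstep.1, Equiv.Perm.mul_apply]
      rcases eq_or_ne ((R l (t+1)) x) 0 with hy0 | hy0
      · have hRxw : (R l t) x = wf l t := by rw [happly, hy0, Equiv.swap_apply_left]
        rw [hRxw, merge_E hstar hprod htrans hlen ht hsp]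
        have := E_mem π hx hZ1
        omega
      rcases eq_or_ne ((R l (t+1)) x) (wf l t) with hyw | hyw
      · exfalso
        apply hxw
        exact (R l (t+1)).injective
          (by rw [hyw, merge_fixed hstar hprod htrans hlen ht hsp])
      · have heq : (R l t) x = (R l (t+1)) x := by
          rw [happly, Equiv.swap_apply_of_ne_of_ne hy0 hyw]
        rw [heq]
        exact ih (t+1) (by omega) x hZ1 hx hy0

lemma suf (hstar : IsStarList l) (hprod : l.prod = π) (htrans : IsTransitiveList l)
    (hlen : l.length = n + numCycles π - 2) {t : ℕ} (ht : t < l.length) (hsp : isSplit l t)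
    {x y : Fin n} (hZx : (R l t).SameCycle 0 x) (hx : x ≠ 0)
    (hZy1 : (R l (t+1)).SameCycle 0 y) (hZy0 : ¬(R l t).SameCycle 0 y) :
    Ee π l y < Ee π l x := by
  classical
  have hstep := R_step hstar ht
  have hy : y ≠ 0 := by rintro rfl; exact hZy0 (Equiv.Perm.SameCycle.refl _ _)
  set ρ := R l (t+1) with hρ
  have hex : ∃ k, 0 < k ∧ (ρ ^ k) (0 : Fin n) = 0 :=
    ⟨orderOf ρ, orderOf_pos ρ, by rw [pow_orderOf_eq_one]; rfl⟩
  have hspec := Nat.find_spec hex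
  have hminfind := fun i (h : i < Nat.find hex) => Nat.find_min hex h
  set ord := Nat.find hex with horddef
  clear_value ord
  obtain ⟨hordpos, hord0⟩ := hspec
  have hmin0 : ∀ i, 0 < i → i < ord → (ρ ^ i) (0:Fin n) ≠ 0 :=
    fun i hi hio hcon => hminfind i hio ⟨hi, hcon⟩
  have powmod : ∀ i, (ρ ^ i) (0:Fin n) = (ρ ^ (i % ord)) 0 := by
    intro i
    induction i using Nat.strong_induction_on with
    | _ i ih =>
      rcases lt_or_ge i ord with h | h
      · rw [Nat.mod_eq_of_lt h]
      · have hdecomp : i = (i - ord) + ord := by omega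
        have h1 : (ρ ^ i) (0:Fin n) = (ρ ^ (i - ord)) 0 := by
          conv_lhs => rw [hdecomp]
          rw [pow_add, Equiv.Perm.mul_apply, hord0]
        rw [h1, ih (i - ord) (by omega), Nat.mod_eq_sub_mod h]
  have hpos : ∀ z, ρ.SameCycle 0 z → z ≠ 0 → ∃ k, 0 < k ∧ k < ord ∧ (ρ ^ k) 0 = z := by
    intro z hz hzne
    obtain ⟨i, hi⟩ := sameCycle_nat.mp hz
    refine ⟨i % ord, ?_, Nat.mod_lt _ hordpos, by rw [← powmod, hi]⟩
    rcases Nat.eq_zero_or_pos (i % ord) with h0 | h0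
    · exfalso
      apply hzne
      rw [← hi, powmod, h0, pow_zero]
      rfl
    · exact h0
  have huniq : ∀ k k', 0 < k → k < k' → k' < ord → (ρ ^ k) (0:Fin n) ≠ (ρ ^ k') 0 := by
    intro k k' hk hkk' hk' heq
    have hcalc : (ρ ^ (ord - k' + k)) (0:Fin n) = 0 := by
      have h1 : (ρ ^ (ord - k')) ((ρ ^ k') (0:Fin n)) = 0 := by
        rw [← Equiv.Perm.mul_apply, ← pow_add, show ord - k' + k' = ord by omega, hord0]
      rw [← heq, ← Equiv.Perm.mul_apply, ← pow_add] at h1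
      exact h1
    exact hmin0 _ (by omega) (by omega) hcalc
  obtain ⟨j, hjpos, hjord, hjw⟩ := hpos (wf l t) hsp hstep.2
  have hZx1 : ρ.SameCycle 0 x := (S2 hstep.2 hsp hstep.1 x).mpr (Or.inl hZx)
  obtain ⟨kx, hkxpos, hkxord, hkx⟩ := hpos x hZx1 hx
  obtain ⟨ky, hkypos, hkyord, hky⟩ := hpos y hZy1 hy
  have hnZw : ¬(R l t).SameCycle 0 (wf l t) := OC4 hstep.2 hsp hstep.1
  have claim1 : ∀ d, j + d < ord → (R l t).SameCycle (wf l t) ((ρ ^ (j + d)) 0) := by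
    intro d
    induction d with
    | zero =>
      intro _
      rw [Nat.add_zero, hjw]
    | succ d ih =>
      intro hd
      have ihh := ih (by omega)
      have hz1 : (ρ ^ (j + d + 1)) (0:Fin n) = ρ ((ρ ^ (j+d)) 0) := by
        rw [pow_succ', Equiv.Perm.mul_apply]
      have hne0 : ρ ((ρ ^ (j+d)) 0) ≠ 0 := by
        rw [← hz1]; exact hmin0 _ (by omega) (by omega)
      have hnew : ρ ((ρ ^ (j+d)) 0) ≠ wf l t := by
        rw [← hz1, ← hjw]
        intro hcon
        exact huniq j (j+d+1) hjpos (by omega) hd hcon.symm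
      have hRt : (R l t) ((ρ ^ (j+d)) 0) = ρ ((ρ ^ (j+d)) 0) := by
        rw [hstep.1, Equiv.Perm.mul_apply]
        exact Equiv.swap_apply_of_ne_of_ne hne0 hnew
      have hstep2 : (R l t).SameCycle ((ρ ^ (j+d)) 0) ((ρ^(j+d+1)) 0) := by
        rw [hz1, ← hRt]
        exact ⟨1, by simp⟩
      rw [show j + (d+1) = j + d + 1 by omega]
      exact ihh.trans hstep2
  have expelled : ∀ k, j ≤ k → k < ord → ¬(R l t).SameCycle 0 ((ρ ^ k) 0) := by
    intro k hjk hkord hcon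
    apply hnZw
    have hcl := claim1 (k - j) (by omega)
    rw [show j + (k - j) = k by omega] at hcl
    exact hcon.trans hcl.symm
  have stayer : ∀ k, k < j → (R l t).SameCycle 0 ((ρ ^ k) 0) := by
    intro k
    induction k with
    | zero =>
      intro _
      rw [pow_zero]
      exact ⟨0, rfl⟩
    | succ k ih =>
      intro hk1
      have ihh := ih (by omega)
      have hz1 : (ρ ^ (k + 1)) (0:Fin n) = ρ ((ρ ^ k) 0) := by
        rw [pow_succ', Equiv.Perm.mul_apply]
      have hne0 : (ρ ^ (k+1)) (0:Fin n) ≠ 0 := hmin0 _ (by omega) (by omega)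
      have hnew : (ρ ^ (k+1)) (0:Fin n) ≠ wf l t := by
        rw [← hjw]
        exact huniq (k+1) j (by omega) (by omega) hjord
      have hRt : (R l t) ((ρ ^ k) 0) = (ρ ^ (k+1)) 0 := by
        rw [hstep.1, Equiv.Perm.mul_apply, ← hz1]
        exact Equiv.swap_apply_of_ne_of_ne hne0 hnew
      have hstep2 : (R l t).SameCycle ((ρ ^ k) 0) ((ρ^(k+1)) 0) := by
        rw [← hRt]
        exact ⟨1, by simp⟩
      exact ihh.trans hstep2
  have hkxj : kx < j := by
    by_contra hcon
    push_neg at hcon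
    apply expelled kx hcon hkxord
    rw [hkx]
    exact hZx
  have hkyj : j ≤ ky := by
    by_contra hcon
    push_neg at hcon
    apply hZy0
    have := stayer ky hcon
    rwa [hky] at this
  have dec1 : ∀ m, 0 < m → m + 1 < ord → Ee π l ((ρ^(m+1)) 0) < Ee π l ((ρ^m) 0) := by
    intro m hm hm1
    have hz : ρ.SameCycle 0 ((ρ^m) 0) := ⟨(m : ℤ), by rw [zpow_natCast]⟩
    have happ : ρ ((ρ^m) 0) = (ρ^(m+1)) 0 := by rw [pow_succ', Equiv.Perm.mul_apply]
    have hcc := cyc hstar hprod htrans hlen (l.length - (t+1)) (t+1) rfl ((ρ^m) 0) hz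
      (hmin0 m hm (by omega)) (by rw [show (R l (t+1)) ((ρ^m) 0) = ρ ((ρ^m) 0) from rfl, happ]
                                  exact hmin0 _ (by omega) hm1)
    rw [show (R l (t+1)) ((ρ^m) 0) = ρ ((ρ^m) 0) from rfl, happ] at hcc
    exact hcc
  have dec : ∀ d m, 0 < m → m + d + 1 < ord → Ee π l ((ρ^(m+d+1)) 0) < Ee π l ((ρ^m) 0) := by
    intro d
    induction d with
    | zero =>
      intro m hm h1
      have := dec1 m hm (by omega)
      rw [show m + 0 + 1 = m + 1 by omega]
      exact this
    | succ d ih =>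
      intro m hm h1
      have h2 := ih m hm (by omega)
      have h3 := dec1 (m+d+1) (by omega) (by omega)
      rw [show m + (d+1) + 1 = (m+d+1) + 1 by omega]
      exact lt_trans h3 h2
  have hfin : Ee π l ((ρ^ky) 0) < Ee π l ((ρ^kx) 0) := by
    have := dec (ky - kx - 1) kx hkxpos
      (by rw [show kx + (ky - kx - 1) + 1 = ky by omega]; exact hkyord)
    rw [show kx + (ky - kx - 1) + 1 = ky by omega] at this
    exact this
  rwa [hkx, hky] at hfin

lemma cross (hstar : IsStarList l) (hprod : l.prod = π) (htrans : IsTransitiveList l)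
    (hlen : l.length = n + numCycles π - 2) {x y : Fin n} (hx : x ≠ 0) (hy : y ≠ 0)
    {sx sy : ℕ} (hnex : (R l sx).SameCycle 0 x) (hney : (R l sy).SameCycle 0 y)
    (h1 : oo π l x < oo π l y) (h2 : oo π l y ≤ Ee π l x) (h3 : Ee π l x < Ee π l y) :
    False := by
  have hooy : 1 ≤ oo π l y := by omega
  have hZy1 : (R l ((oo π l y - 1) + 1)).SameCycle 0 y := by
    apply Z_at hstar hprod htrans hlen hy hney (by omega) (by omega)
  have hZy0 : ¬(R l (oo π l y - 1)).SameCycle 0 y := by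
    by_cases hfree : π.SameCycle 0 y
    · exfalso
      rw [oo, if_pos hfree] at hooy
      omega
    · have hoy : oo π l y = Tt π l y + 1 := by rw [oo, if_neg hfree]
      intro hcon
      exact not_Z_below hprod hfree _ (by omega) hcon
  have ht : oo π l y - 1 < l.length := by
    have := Z_lt hy hZy1
    omega
  have hsp : isSplit l (oo π l y - 1) := by
    by_contra hm
    exact hZy0 ((Z_merge hstar hprod htrans hlen ht hm y).mpr (Or.inl hZy1))
  have hZx : (R l (oo π l y - 1)).SameCycle 0 x :=
    Z_at hstar hprod htrans hlen hx hnex (by omega) (by omega)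
  exact absurd (suf hstar hprod htrans hlen ht hsp hZx hx hZy1 hZy0) (by omega)

end Main

end StarFact

open StarFact Finset

/-- Lemma 2: cycles are encoded by orbit representatives `u` (for `σ`) and
`v` (for `σ̂`); a factor `(1 i)` meets a cycle iff `i` lies in its orbit. -/
theorem stmt8 {n : ℕ} [NeZero n] (π : Equiv.Perm (Fin n))
    (l : List (Equiv.Perm (Fin n)))
    (hl : IsMinimalTransitiveStarFactorization π l)
    (u v : Fin n) (hdist : ¬ π.SameCycle u v)
    (a c b : Fin l.length) (hac : a < c) (hcb : c < b)
    (hta : ∃ i : Fin n, i ≠ 0 ∧ π.SameCycle u i ∧ l.get a = Equiv.swap 0 i)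
    (htb : ∃ i : Fin n, i ≠ 0 ∧ π.SameCycle u i ∧ l.get b = Equiv.swap 0 i)
    (htc : ∃ i : Fin n, i ≠ 0 ∧ π.SameCycle v i ∧ l.get c = Equiv.swap 0 i) :
    ¬ π.SameCycle v 0 ∧
    ∀ j : Fin l.length,
      (∃ i : Fin n, i ≠ 0 ∧ π.SameCycle v i ∧ l.get j = Equiv.swap 0 i) →
      a < j ∧ j < b := by
  obtain ⟨⟨hstar, hprod⟩, htrans, hlen⟩ := hl
  have hletter : ∀ (j : Fin l.length) (i : Fin n), l.get j = Equiv.swap 0 i → wf l ↑j = i := by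
    intro j i hj
    have h1 : l[(j : ℕ)]'j.isLt = Equiv.swap 0 (wf l ↑j) := getElem_eq hstar j.isLt
    rw [List.get_eq_getElem] at hj
    have h2 : Equiv.swap 0 (wf l ↑j) = Equiv.swap 0 i := by rw [← h1, hj]
    have := congrArg (fun σ : Equiv.Perm (Fin n) => σ 0) h2
    simpa [Equiv.swap_apply_left] using this
  obtain ⟨ia, hia0, hua, hga⟩ := hta
  obtain ⟨ib, hib0, hub, hgb⟩ := htb
  obtain ⟨ic, hic0, hvc, hgc⟩ := htc
  have hwa := hletter a ia hga
  have hwb := hletter b ib hgb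
  have hwc := hletter c ic hgc
  have haU : π.SameCycle u (wf l ↑a) := by rw [hwa]; exact hua
  have hbU : π.SameCycle u (wf l ↑b) := by rw [hwb]; exact hub
  have hcV : π.SameCycle v (wf l ↑c) := by rw [hwc]; exact hvc
  have hwa0 : wf l ↑a ≠ 0 := (R_step hstar a.isLt).2
  have hwb0 : wf l ↑b ≠ 0 := (R_step hstar b.isLt).2
  have hwc0 : wf l ↑c ≠ 0 := (R_step hstar c.isLt).2
  have hac' : (a : ℕ) < (c : ℕ) := hac
  have hcb' : (c : ℕ) < (b : ℕ) := hcb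
  -- Part 1 : the cycle of v does not contain 0
  have hv0 : ¬ π.SameCycle v 0 := by
    intro hv0
    have hufree : ¬π.SameCycle 0 u := fun h => hdist (h.symm.trans hv0.symm)
    have hiafree : ¬π.SameCycle 0 (wf l ↑a) := fun h => hufree (h.trans haU.symm)
    have hibfree : ¬π.SameCycle 0 (wf l ↑b) := fun h => hufree (h.trans hbU.symm)
    have haT : Tt π l (wf l ↑a) ≤ ↑a :=
      occ_ge_T hstar hprod htrans hiafree a.isLt (Equiv.Perm.SameCycle.refl _ _)
    have hbmerge := occ_merge hstar hprod htrans hlen hwa0 hiafree b.isLt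
      (haU.symm.trans hbU) (by omega)
    have hc0 : π.SameCycle 0 (wf l ↑c) := hv0.symm.trans hcV
    have hcmerge := occ0_merge hstar hprod htrans hlen c.isLt hc0
    exact cross hstar hprod htrans hlen hwc0 hwb0 hcmerge.2.2 hbmerge.2.2
      (by rw [hcmerge.2.1, hbmerge.2.1]; omega)
      (by rw [hbmerge.2.1, hcmerge.1]; omega)
      (by rw [hcmerge.1, hbmerge.1]; omega)
  refine ⟨hv0, ?_⟩
  rintro j ⟨ij, hij0, hvj, hgj⟩
  have hwj := hletter j ij hgj
  have hjV : π.SameCycle v (wf l ↑j) := by rw [hwj]; exact hvj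
  have hwj0 : wf l ↑j ≠ 0 := (R_step hstar j.isLt).2
  have hicfree : ¬π.SameCycle 0 (wf l ↑c) := fun h => hv0 (hcV.trans h.symm)
  have hijfree : ¬π.SameCycle 0 (wf l ↑j) := fun h => hv0 (hjV.trans h.symm)
  have hcT : Tt π l (wf l ↑c) ≤ ↑c :=
    occ_ge_T hstar hprod htrans hicfree c.isLt (Equiv.Perm.SameCycle.refl _ _)
  have hjT : Tt π l (wf l ↑c) ≤ ↑j :=
    occ_ge_T hstar hprod htrans hicfree j.isLt (hcV.symm.trans hjV)
  have hTspec_c := Tt_spec hstar hprod htrans hwc0 hicfree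
  have hjneb : (j : ℕ) ≠ (b : ℕ) := by
    intro heq
    apply hdist
    have : wf l ↑j = wf l ↑b := by rw [heq]
    exact (hjV.trans (by rw [this]; exact hbU.symm)).symm
  suffices h : (a : ℕ) < (j : ℕ) ∧ (j : ℕ) < (b : ℕ) by
    exact ⟨h.1, h.2⟩
  by_cases hu0 : π.SameCycle 0 u
  · -- the cycle of u contains 0
    have ha0 : π.SameCycle 0 (wf l ↑a) := hu0.trans haU
    have hb0 : π.SameCycle 0 (wf l ↑b) := hu0.trans hbU
    have hamerge := occ0_merge hstar hprod htrans hlen a.isLt ha0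
    have hbmerge := occ0_merge hstar hprod htrans hlen b.isLt hb0
    have hlow : (a : ℕ) < Tt π l (wf l ↑c) := by
      by_contra hcon
      push_neg at hcon
      rcases eq_or_lt_of_le hcon with heq | hlt
      · -- the split time equals a : its letter is in both cycles
        apply hdist
        have hTc := hTspec_c.2.2.1
        rw [heq] at hTc
        exact (haU.trans hTc).trans hcV.symm
      · have hcmerge := occ_merge hstar hprod htrans hlen hwc0 hicfree c.isLt
          (Equiv.Perm.SameCycle.refl _ _) (by omega)
        exact absurd (cross hstar hprod htrans hlen hwa0 hwc0 hamerge.2.2 hcmerge.2.2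
          (by rw [hamerge.2.1, hcmerge.2.1]; omega)
          (by rw [hcmerge.2.1, hamerge.1]; omega)
          (by rw [hamerge.1, hcmerge.1]; omega)) (fun hf => hf)
    refine ⟨by omega, ?_⟩
    by_contra hcon
    push_neg at hcon
    have hbj : (b : ℕ) < (j : ℕ) := by omega
    have hjmerge := occ_merge hstar hprod htrans hlen hwc0 hicfree j.isLt
      (hcV.symm.trans hjV) (by omega)
    exact cross hstar hprod htrans hlen hwb0 hwj0 hbmerge.2.2 hjmerge.2.2
      (by rw [hbmerge.2.1, hjmerge.2.1]; omega)
      (by rw [hjmerge.2.1, hbmerge.1]; omega)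
      (by rw [hbmerge.1, hjmerge.1]; omega)
  · -- the cycle of u is 0-free
    have hiafree : ¬π.SameCycle 0 (wf l ↑a) := fun h => hu0 (h.trans haU.symm)
    have hibfree : ¬π.SameCycle 0 (wf l ↑b) := fun h => hu0 (h.trans hbU.symm)
    have haT : Tt π l (wf l ↑a) ≤ ↑a :=
      occ_ge_T hstar hprod htrans hiafree a.isLt (Equiv.Perm.SameCycle.refl _ _)
    have hbT : Tt π l (wf l ↑a) ≤ ↑b :=
      occ_ge_T hstar hprod htrans hiafree b.isLt (haU.symm.trans hbU)
    have hbmerge := occ_merge hstar hprod htrans hlen hwa0 hiafree b.isLt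
      (haU.symm.trans hbU) (by omega)
    have hTspec_a := Tt_spec hstar hprod htrans hwa0 hiafree
    have hTT : Tt π l (wf l ↑a) < Tt π l (wf l ↑c) := by
      by_contra hcon
      push_neg at hcon
      rcases eq_or_lt_of_le hcon with heq | hlt
      · apply hdist
        have hTc := hTspec_c.2.2.1
        have hTa := hTspec_a.2.2.1
        rw [heq] at hTc
        exact (haU.trans hTa.symm).trans (hTc.trans hcV.symm)
      · have hcmerge := occ_merge hstar hprod htrans hlen hwc0 hicfree c.isLt
          (Equiv.Perm.SameCycle.refl _ _) (by omega)
        exact cross hstar hprod htrans hlen hwc0 hwb0 hcmerge.2.2 hbmerge.2.2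
          (by rw [hcmerge.2.1, hbmerge.2.1]; omega)
          (by rw [hbmerge.2.1, hcmerge.1]; omega)
          (by rw [hcmerge.1, hbmerge.1]; omega)
    have hlow : (a : ℕ) < Tt π l (wf l ↑c) := by
      by_contra hcon
      push_neg at hcon
      rcases eq_or_lt_of_le hcon with heq | hlt
      · apply hdist
        have hTc := hTspec_c.2.2.1
        rw [heq] at hTc
        exact (haU.trans hTc).trans hcV.symm
      · have hamerge := occ_merge hstar hprod htrans hlen hwa0 hiafree a.isLt
          (Equiv.Perm.SameCycle.refl _ _) (by omega)
        have hcmerge := occ_merge hstar hprod htrans hlen hwc0 hicfree c.isLt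
          (Equiv.Perm.SameCycle.refl _ _) (by omega)
        exact cross hstar hprod htrans hlen hwa0 hwc0 hamerge.2.2 hcmerge.2.2
          (by rw [hamerge.2.1, hcmerge.2.1]; omega)
          (by rw [hcmerge.2.1, hamerge.1]; omega)
          (by rw [hamerge.1, hcmerge.1]; omega)
    refine ⟨by omega, ?_⟩
    by_contra hcon
    push_neg at hcon
    have hbj : (b : ℕ) < (j : ℕ) := by omega
    have hjmerge := occ_merge hstar hprod htrans hlen hwc0 hicfree j.isLt
      (Equiv.Perm.SameCycle.refl _ _ |>.trans (hcV.symm.trans hjV)) (by omega)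
    exact cross hstar hprod htrans hlen hwb0 hwj0 hbmerge.2.2 hjmerge.2.2
      (by rw [hbmerge.2.1, hjmerge.2.1]; omega)
      (by rw [hjmerge.2.1, hbmerge.1]; omega)
      (by rw [hbmerge.1, hjmerge.1]; omega)
end

section
/- Let π ∈ S_n have cycles of lengths ℓ_1,...,ℓ_m (fixed points counted as cycles), including exactly k fixed points not equal to the point 1. Then the number of minimal-length star factorizations of π equals (n + m − 2(k+1))!·ℓ_1⋯ℓ_m / (n−k)!. -/
/-- The multiset of all orbit sizes of `π` (fixed points contribute 1's). -/
def fullCycleType {n : ℕ} (π : Equiv.Perm (Fin n)) : Multiset ℕ :=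
  π.cycleType + Multiset.replicate (Finset.univ.filter fun x => π x = x).card 1

open Equiv Equiv.Perm Finset

namespace StarFact10

variable {n : ℕ}

def orb (π : Perm (Fin n)) (x : Fin n) : Finset (Fin n) :=
  univ.filter (fun y => π.SameCycle x y)

lemma mem_orb {π : Perm (Fin n)} {x y : Fin n} : y ∈ orb π x ↔ π.SameCycle x y := by
  simp [orb]

lemma self_mem_orb (π : Perm (Fin n)) (x : Fin n) : x ∈ orb π x :=
  mem_orb.2 (SameCycle.refl _ _)

lemma apply_mem_orb (π : Perm (Fin n)) {x y : Fin n} (h : y ∈ orb π x) : π y ∈ orb π x :=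
  mem_orb.2 ((mem_orb.1 h).apply_right)

lemma orb_eq_of_sameCycle {π : Perm (Fin n)} {x y : Fin n} (h : π.SameCycle x y) :
    orb π x = orb π y := by
  ext z; simp only [mem_orb]
  exact ⟨fun hz => h.symm.trans hz, fun hz => h.trans hz⟩

lemma orb_eq_of_mem {π : Perm (Fin n)} {x y : Fin n} (h : y ∈ orb π x) :
    orb π x = orb π y := orb_eq_of_sameCycle (mem_orb.1 h)

/-- membership in a closed set propagates along a cycle -/
lemma mem_of_closed {τ : Perm (Fin n)} {S : Finset (Fin n)}
    (hS : ∀ x ∈ S, τ x ∈ S) {x y : Fin n} (hx : x ∈ S) (h : τ.SameCycle x y) : y ∈ S := by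
  have key : ∀ k : ℕ, (τ ^ k) x ∈ S := by
    intro k
    induction k with
    | zero => simpa using hx
    | succ m ih =>
        rw [pow_succ', Perm.mul_apply]
        exact hS _ ih
  obtain ⟨k, -, rfl⟩ := h.exists_pow_eq'
  exact key k

lemma orb_subset_of_closed {τ : Perm (Fin n)} {S : Finset (Fin n)}
    (hS : ∀ x ∈ S, τ x ∈ S) {x : Fin n} (hx : x ∈ S) : orb τ x ⊆ S := by
  intro y hy
  exact mem_of_closed hS hx (mem_orb.1 hy)

lemma orb_fixed {π : Perm (Fin n)} {x : Fin n} (h : π x = x) : orb π x = {x} := by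
  ext y
  simp only [mem_orb, Finset.mem_singleton]
  constructor
  · rintro ⟨k, rfl⟩
    exact (zpow_apply_eq_self_of_apply_eq_self h k).symm ▸ rfl
  · rintro rfl; exact SameCycle.refl _ _

lemma fixed_of_orb_singleton {π : Perm (Fin n)} {x : Fin n} (h : (orb π x).card ≤ 1) :
    π x = x := by
  have h1 := self_mem_orb π x
  have h2 := apply_mem_orb π h1
  rcases Finset.card_le_one.1 h _ h2 _ h1 with h3
  exact h3

lemma orb_card_pos (π : Perm (Fin n)) (x : Fin n) : 0 < (orb π x).card :=
  Finset.card_pos.2 ⟨x, self_mem_orb π x⟩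

def orbs (π : Perm (Fin n)) : Finset (Finset (Fin n)) := univ.image (orb π)

lemma orb_mem_orbs (π : Perm (Fin n)) (x : Fin n) : orb π x ∈ orbs π :=
  Finset.mem_image_of_mem _ (Finset.mem_univ x)

lemma mem_orbs {π : Perm (Fin n)} {O : Finset (Fin n)} :
    O ∈ orbs π ↔ ∃ x, orb π x = O := by simp [orbs, eq_comm]

lemma orb_eq_of_mem_orbs {π : Perm (Fin n)} {O : Finset (Fin n)} (hO : O ∈ orbs π)
    {x : Fin n} (hx : x ∈ O) : orb π x = O := by
  obtain ⟨y, rfl⟩ := mem_orbs.1 hO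
  exact (orb_eq_of_mem hx).symm

lemma orbs_pairwiseDisjoint (π : Perm (Fin n)) :
    ∀ O₁ ∈ orbs π, ∀ O₂ ∈ orbs π, O₁ ≠ O₂ → Disjoint O₁ O₂ := by
  intro O₁ h₁ O₂ h₂ hne
  rw [Finset.disjoint_left]
  intro a ha1 ha2
  exact hne ((orb_eq_of_mem_orbs h₁ ha1).symm.trans (orb_eq_of_mem_orbs h₂ ha2))

lemma biUnion_orbs (π : Perm (Fin n)) : (orbs π).biUnion id = univ := by
  ext x
  simp only [Finset.mem_biUnion, id, Finset.mem_univ, iff_true]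
  exact ⟨orb π x, orb_mem_orbs π x, self_mem_orb π x⟩

lemma sum_orbs_card (π : Perm (Fin n)) : ∑ O ∈ orbs π, O.card = n := by
  classical
  have h := Finset.card_biUnion (s := orbs π) (t := id) ?_
  · rw [biUnion_orbs] at h
    simpa using h.symm
  · intro x hx y hy hxy
    exact orbs_pairwiseDisjoint π x hx y hy hxy

lemma card_orbs_le (π : Perm (Fin n)) : (orbs π).card ≤ n := by
  calc (orbs π).card = ∑ O ∈ orbs π, 1 := by simp
  _ ≤ ∑ O ∈ orbs π, O.card := Finset.sum_le_sum fun O hO => by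
      obtain ⟨x, rfl⟩ := mem_orbs.1 hO; exact orb_card_pos π x
  _ = n := sum_orbs_card π

section Swap

variable [NeZero n]

lemma swap_apply_ne {π : Perm (Fin n)} {i x : Fin n} (h0 : x ≠ 0) (hi : x ≠ i) :
    (π * Equiv.swap 0 i) x = π x := by
  rw [Perm.mul_apply, Equiv.swap_apply_of_ne_of_ne h0 hi]

lemma swap_apply_zero (π : Perm (Fin n)) (i : Fin n) :
    (π * Equiv.swap 0 i) 0 = π i := by rw [Perm.mul_apply, Equiv.swap_apply_left]

lemma swap_apply_i (π : Perm (Fin n)) (i : Fin n) :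
    (π * Equiv.swap 0 i) i = π 0 := by rw [Perm.mul_apply, Equiv.swap_apply_right]

lemma mul_swap_swap (π : Perm (Fin n)) (i : Fin n) :
    (π * Equiv.swap 0 i) * Equiv.swap 0 i = π := by
  rw [mul_assoc, Equiv.swap_mul_self, mul_one]

lemma union_closed (π : Perm (Fin n)) (i : Fin n) :
    ∀ x ∈ orb (π * Equiv.swap 0 i) 0 ∪ orb (π * Equiv.swap 0 i) i,
      π x ∈ orb (π * Equiv.swap 0 i) 0 ∪ orb (π * Equiv.swap 0 i) i := by
  set τ := π * Equiv.swap 0 i with hτ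
  intro x hx
  by_cases h0 : x = 0
  · subst h0
    have : π 0 = τ i := (swap_apply_i π i).symm
    rw [this]
    exact Finset.mem_union_right _ (apply_mem_orb τ (self_mem_orb τ i))
  by_cases hi : x = i
  · subst hi
    have : π x = τ 0 := (swap_apply_zero π x).symm
    rw [this]
    exact Finset.mem_union_left _ (apply_mem_orb τ (self_mem_orb τ 0))
  · have : π x = τ x := (swap_apply_ne h0 hi).symm
    rw [this]
    rcases Finset.mem_union.1 hx with h | h
    · exact Finset.mem_union_left _ (apply_mem_orb τ h)
    · exact Finset.mem_union_right _ (apply_mem_orb τ h)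

lemma union_subset_union (π : Perm (Fin n)) (i : Fin n) :
    orb π 0 ∪ orb π i ⊆ orb (π * Equiv.swap 0 i) 0 ∪ orb (π * Equiv.swap 0 i) i := by
  set τ := π * Equiv.swap 0 i with hτ
  apply Finset.union_subset
  · exact orb_subset_of_closed (union_closed π i)
      (Finset.mem_union_left _ (self_mem_orb τ 0))
  · exact orb_subset_of_closed (union_closed π i)
      (Finset.mem_union_right _ (self_mem_orb τ i))

lemma union_orb_swap (π : Perm (Fin n)) (i : Fin n) :
    orb (π * Equiv.swap 0 i) 0 ∪ orb (π * Equiv.swap 0 i) i = orb π 0 ∪ orb π i := by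
  apply subset_antisymm
  · have := union_subset_union (π * Equiv.swap 0 i) i
    rwa [mul_swap_swap] at this
  · exact union_subset_union π i

lemma orb_swap_outside {π : Perm (Fin n)} {i x : Fin n}
    (hx0 : ¬π.SameCycle 0 x) (hxi : ¬π.SameCycle i x) :
    orb (π * Equiv.swap 0 i) x = orb π x := by
  set τ := π * Equiv.swap 0 i with hτ
  have hne : ∀ y ∈ orb π x, y ≠ 0 ∧ y ≠ i := by
    intro y hy
    constructor
    · rintro rfl; exact hx0 (mem_orb.1 hy).symm
    · rintro rfl; exact hxi (mem_orb.1 hy).symm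
  have hclosedτ : ∀ y ∈ orb π x, τ y ∈ orb π x := by
    intro y hy
    obtain ⟨h0, hi⟩ := hne y hy
    rw [show τ y = π y from swap_apply_ne h0 hi]
    exact apply_mem_orb π hy
  have hsub : orb τ x ⊆ orb π x := orb_subset_of_closed hclosedτ (self_mem_orb π x)
  have hx0' : ¬τ.SameCycle 0 x := by
    intro hc
    have : x ∈ orb π 0 ∪ orb π i := by
      rw [← union_orb_swap π i]
      exact Finset.mem_union_left _ (mem_orb.2 hc)
    rcases Finset.mem_union.1 this with h | h
    · exact hx0 (mem_orb.1 h)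
    · exact hxi (mem_orb.1 h)
  have hxi' : ¬τ.SameCycle i x := by
    intro hc
    have : x ∈ orb π 0 ∪ orb π i := by
      rw [← union_orb_swap π i]
      exact Finset.mem_union_right _ (mem_orb.2 hc)
    rcases Finset.mem_union.1 this with h | h
    · exact hx0 (mem_orb.1 h)
    · exact hxi (mem_orb.1 h)
  have hne' : ∀ y ∈ orb τ x, y ≠ 0 ∧ y ≠ i := by
    intro y hy
    constructor
    · rintro rfl; exact hx0' (mem_orb.1 hy).symm
    · rintro rfl; exact hxi' (mem_orb.1 hy).symm
  have hclosedπ : ∀ y ∈ orb τ x, π y ∈ orb τ x := by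
    intro y hy
    obtain ⟨h0, hi⟩ := hne' y hy
    rw [show π y = τ y from (swap_apply_ne h0 hi).symm]
    exact apply_mem_orb τ hy
  exact subset_antisymm hsub (orb_subset_of_closed hclosedπ (self_mem_orb τ x))

/-- joining: if 0 and i are in different cycles of π, they are in the same cycle of π·(0 i). -/
lemma sameCycle_swap_of_not {π : Perm (Fin n)} {i : Fin n}
    (h : ¬π.SameCycle 0 i) : (π * Equiv.swap 0 i).SameCycle 0 i := by
  set τ := π * Equiv.swap 0 i with hτ
  by_contra hc
  set D := orb π 0 ∩ orb τ i with hD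
  have hmem : π 0 ∈ D := by
    apply Finset.mem_inter.2
    constructor
    · exact apply_mem_orb π (self_mem_orb π 0)
    · rw [show π 0 = τ i from (swap_apply_i π i).symm]
      exact apply_mem_orb τ (self_mem_orb τ i)
  have hclosed : ∀ x ∈ D, π x ∈ D := by
    intro x hx
    obtain ⟨hx1, hx2⟩ := Finset.mem_inter.1 hx
    have hxi : x ≠ i := by rintro rfl; exact h (mem_orb.1 hx1)
    have hx0 : x ≠ 0 := by
      rintro rfl
      exact hc ((mem_orb.1 hx2).symm)
    apply Finset.mem_inter.2
    refine ⟨apply_mem_orb π hx1, ?_⟩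
    rw [show π x = τ x from (swap_apply_ne hx0 hxi).symm]
    exact apply_mem_orb τ hx2
  have h0D : (0 : Fin n) ∈ D := by
    apply mem_of_closed hclosed hmem
    exact (sameCycle_apply_left).2 (SameCycle.refl _ _) |>.symm.symm
  exact hc ((mem_orb.1 (Finset.mem_inter.1 h0D).2).symm)

end Swap

section Bridge

lemma support_cycleOf_eq_orb {π : Perm (Fin n)} {x : Fin n} (hx : x ∈ π.support) :
    (π.cycleOf x).support = orb π x := by
  ext y
  rw [Equiv.Perm.mem_support_cycleOf_iff, mem_orb]
  exact ⟨fun h => h.1, fun h => ⟨h, hx⟩⟩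

lemma support_injOn_factors (σ : Perm (Fin n)) :
    ∀ c₁ ∈ σ.cycleFactorsFinset, ∀ c₂ ∈ σ.cycleFactorsFinset,
      c₁.support = c₂.support → c₁ = c₂ := by
  intro c₁ h₁ c₂ h₂ h
  by_contra hne
  have hd := σ.cycleFactorsFinset_pairwise_disjoint h₁ h₂ hne
  have hd' := Equiv.Perm.Disjoint.disjoint_support hd
  rw [h, disjoint_self] at hd'
  have : c₂.IsCycle := (Equiv.Perm.mem_cycleFactorsFinset_iff.1 h₂).1
  have h2 := this.two_le_card_support
  rw [hd'] at h2
  simp at h2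

lemma image_support_factors (σ : Perm (Fin n)) :
    σ.cycleFactorsFinset.image Equiv.Perm.support
      = (orbs σ).filter (fun O => 1 < O.card) := by
  ext O
  simp only [Finset.mem_image, Finset.mem_filter]
  constructor
  · rintro ⟨c, hc, rfl⟩
    have hcyc : c.IsCycle := (Equiv.Perm.mem_cycleFactorsFinset_iff.1 hc).1
    obtain ⟨x, hx⟩ := Finset.card_pos.1 (lt_of_lt_of_le (by norm_num) hcyc.two_le_card_support)
    have hxσ : x ∈ σ.support := by
      rw [Equiv.Perm.mem_support]
      rw [← (Equiv.Perm.mem_cycleFactorsFinset_iff.1 hc).2 x hx]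
      exact Equiv.Perm.mem_support.1 hx
    have hco : c = σ.cycleOf x := Equiv.Perm.cycle_is_cycleOf hx hc
    have hsup : c.support = orb σ x := by rw [hco]; exact support_cycleOf_eq_orb hxσ
    exact ⟨hsup ▸ orb_mem_orbs σ x, hcyc.two_le_card_support⟩
  · rintro ⟨hO, hcard⟩
    obtain ⟨x, rfl⟩ := mem_orbs.1 hO
    have hx : σ x ≠ x := by
      intro h
      rw [orb_fixed h] at hcard
      simp at hcard
    refine ⟨σ.cycleOf x, Equiv.Perm.cycleOf_mem_cycleFactorsFinset_iff.2
      (Equiv.Perm.mem_support.2 hx), support_cycleOf_eq_orb (Equiv.Perm.mem_support.2 hx)⟩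

lemma cycleType_eq_orbs (σ : Perm (Fin n)) :
    σ.cycleType = Multiset.map Finset.card ((orbs σ).filter (fun O => 1 < O.card)).val := by
  rw [← image_support_factors, Equiv.Perm.cycleType_def,
    Finset.image_val_of_injOn (f := Equiv.Perm.support)
      (fun c₁ h₁ c₂ h₂ h => support_injOn_factors σ c₁ h₁ c₂ h₂ h),
    Multiset.map_map]

lemma small_orbs_eq (σ : Perm (Fin n)) :
    (orbs σ).filter (fun O => ¬ 1 < O.card)
      = (univ.filter fun x => σ x = x).image (fun x => ({x} : Finset (Fin n))) := by
  ext O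
  simp only [Finset.mem_filter, Finset.mem_image, Finset.mem_univ, true_and, not_lt]
  constructor
  · rintro ⟨hO, hcard⟩
    obtain ⟨x, rfl⟩ := mem_orbs.1 hO
    have hfix := fixed_of_orb_singleton hcard
    exact ⟨x, hfix, (orb_fixed hfix).symm⟩
  · rintro ⟨x, hfix, rfl⟩
    constructor
    · rw [← orb_fixed hfix]
      exact orb_mem_orbs σ x
    · simp

lemma card_orbs_eq (σ : Perm (Fin n)) :
    (orbs σ).card = σ.cycleType.card + (univ.filter fun x => σ x = x).card := by
  rw [← Finset.card_filter_add_card_filter_not (s := orbs σ)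
    (p := fun O => 1 < O.card)]
  congr 1
  · rw [cycleType_eq_orbs]
    simp only [Multiset.card_map]
    rfl
  · rw [small_orbs_eq]
    exact Finset.card_image_of_injective _ (fun a b h => by
      simpa using Finset.singleton_injective h)

lemma prod_orbs_eq (σ : Perm (Fin n)) :
    ∏ O ∈ orbs σ, O.card = σ.cycleType.prod := by
  rw [← Finset.prod_filter_mul_prod_filter_not (orbs σ) (fun O => 1 < O.card)]
  have h2 : ∏ O ∈ (orbs σ).filter (fun O => ¬ 1 < O.card), O.card = 1 := by
    apply Finset.prod_eq_one
    intro O hO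
    obtain ⟨hO1, hO2⟩ := Finset.mem_filter.1 hO
    obtain ⟨x, rfl⟩ := mem_orbs.1 hO1
    have h1 := orb_card_pos σ x
    omega
  rw [h2, mul_one, cycleType_eq_orbs]
  rfl

end Bridge

section Split

variable [NeZero n]

omit [NeZero n] in
lemma orbs_congr {π τ : Perm (Fin n)} (h : ∀ x, orb τ x = orb π x) : orbs τ = orbs π := by
  unfold orbs
  exact Finset.image_congr (fun x _ => h x)

lemma not_sameCycle_swap_of {π : Perm (Fin n)} {i : Fin n} (hi : i ≠ 0)
    (h : π.SameCycle 0 i) : ¬(π * Equiv.swap 0 i).SameCycle 0 i := by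
  set τ := π * Equiv.swap 0 i with hτ
  intro hc
  have hu := union_orb_swap π i
  rw [← orb_eq_of_sameCycle hc, ← orb_eq_of_sameCycle h, Finset.union_self,
    Finset.union_self] at hu
  have horb : ∀ x, orb τ x = orb π x := by
    intro x
    by_cases hx : π.SameCycle 0 x
    · have hx1 : x ∈ orb τ 0 := by rw [hu]; exact mem_orb.2 hx
      rw [← orb_eq_of_mem hx1, hu, orb_eq_of_sameCycle hx]
    · have hxi : ¬π.SameCycle i x := fun hc2 => hx (h.trans hc2)
      exact orb_swap_outside hx hxi
  have hct : τ.cycleType = π.cycleType := by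
    rw [cycleType_eq_orbs, cycleType_eq_orbs, orbs_congr horb]
  have hsign : τ.sign = π.sign := by
    rw [Equiv.Perm.sign_of_cycleType, Equiv.Perm.sign_of_cycleType, hct]
  rw [hτ, map_mul, Equiv.Perm.sign_swap (Ne.symm hi)] at hsign
  have : (-1 : ℤˣ) = 1 := mul_eq_left.1 hsign
  simp at this

end Split

section Invariants

def Mn (π : Perm (Fin n)) : ℕ := (orbs π).card

def Pp (π : Perm (Fin n)) : ℕ := ∏ O ∈ orbs π, O.card

variable [NeZero n]

def Kk (π : Perm (Fin n)) : ℕ := (univ.filter fun x => π x = x ∧ x ≠ 0).card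

def muZ (π : Perm (Fin n)) : ℤ := (n : ℤ) + Mn π - 2 * Kk π - 2

lemma orb_zero_ne_orb_i {π : Perm (Fin n)} {i : Fin n} (h : ¬π.SameCycle 0 i) :
    orb π 0 ≠ orb π i := by
  intro hc
  exact h (mem_orb.1 (hc ▸ self_mem_orb π i))

lemma orb_swap_zero_join {π : Perm (Fin n)} {i : Fin n} (hi : i ≠ 0)
    (h : ¬π.SameCycle 0 i) : orb (π * Equiv.swap 0 i) 0 = orb π 0 ∪ orb π i := by
  have hsc := sameCycle_swap_of_not (π := π) (i := i) h
  have hu := union_orb_swap π i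
  rwa [← orb_eq_of_sameCycle hsc, Finset.union_self] at hu

lemma orbs_swap_join {π : Perm (Fin n)} {i : Fin n} (hi : i ≠ 0)
    (h : ¬π.SameCycle 0 i) :
    orbs (π * Equiv.swap 0 i)
      = insert (orb π 0 ∪ orb π i) (((orbs π).erase (orb π 0)).erase (orb π i)) := by
  set τ := π * Equiv.swap 0 i with hτ
  ext O
  constructor
  · intro hO
    obtain ⟨x, rfl⟩ := mem_orbs.1 hO
    by_cases hx : x ∈ orb π 0 ∪ orb π i
    · have hx0 : x ∈ orb τ 0 := by rw [orb_swap_zero_join hi h]; exact hx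
      rw [← orb_eq_of_mem hx0, orb_swap_zero_join hi h]
      exact Finset.mem_insert_self _ _
    · rw [Finset.mem_union, mem_orb, mem_orb] at hx
      push_neg at hx
      rw [orb_swap_outside hx.1 hx.2]
      apply Finset.mem_insert_of_mem
      rw [Finset.mem_erase, Finset.mem_erase]
      refine ⟨?_, ?_, orb_mem_orbs π x⟩
      · intro hc
        exact hx.2 (mem_orb.1 (show x ∈ orb π i by rw [← hc]; exact self_mem_orb π x))
      · intro hc
        exact hx.1 (mem_orb.1 (show x ∈ orb π 0 by rw [← hc]; exact self_mem_orb π x))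
  · intro hO
    rcases Finset.mem_insert.1 hO with rfl | hO
    · rw [← orb_swap_zero_join hi h]; exact orb_mem_orbs τ 0
    · rw [Finset.mem_erase, Finset.mem_erase] at hO
      obtain ⟨hne_i, hne_0, hOmem⟩ := hO
      obtain ⟨x, rfl⟩ := mem_orbs.1 hOmem
      have hx0 : ¬π.SameCycle 0 x := by
        intro hc; exact hne_0 ((orb_eq_of_sameCycle hc).symm)
      have hxi : ¬π.SameCycle i x := by
        intro hc; exact hne_i ((orb_eq_of_sameCycle hc).symm)
      rw [← orb_swap_outside hx0 hxi]
      exact orb_mem_orbs τ x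

lemma union_not_mem_erased {π : Perm (Fin n)} {i : Fin n} (hi : i ≠ 0)
    (h : ¬π.SameCycle 0 i) :
    orb π 0 ∪ orb π i ∉ ((orbs π).erase (orb π 0)).erase (orb π i) := by
  intro hc
  have hmem : orb π 0 ∪ orb π i ∈ orbs π := Finset.mem_of_mem_erase (Finset.mem_of_mem_erase hc)
  have h0 : (0 : Fin n) ∈ orb π 0 ∪ orb π i := Finset.mem_union_left _ (self_mem_orb π 0)
  have := orb_eq_of_mem_orbs hmem h0
  have hisub : i ∈ orb π 0 := by
    rw [this]
    exact Finset.mem_union_right _ (self_mem_orb π i)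
  exact h (mem_orb.1 hisub)

lemma Mn_swap_join {π : Perm (Fin n)} {i : Fin n} (hi : i ≠ 0)
    (h : ¬π.SameCycle 0 i) : Mn (π * Equiv.swap 0 i) + 1 = Mn π := by
  unfold Mn
  rw [orbs_swap_join hi h, Finset.card_insert_of_notMem (union_not_mem_erased hi h),
    Finset.card_erase_of_mem, Finset.card_erase_of_mem (orb_mem_orbs π 0)]
  · have h2 : 2 ≤ (orbs π).card := by
      apply Finset.one_lt_card.2
      exact ⟨orb π 0, orb_mem_orbs π 0, orb π i, orb_mem_orbs π i,
        orb_zero_ne_orb_i h⟩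
    omega
  · exact Finset.mem_erase.2 ⟨Ne.symm (orb_zero_ne_orb_i h), orb_mem_orbs π i⟩

lemma Pp_swap_join {π : Perm (Fin n)} {i : Fin n} (hi : i ≠ 0)
    (h : ¬π.SameCycle 0 i) :
    Pp (π * Equiv.swap 0 i) * ((orb π 0).card * (orb π i).card)
      = Pp π * ((orb π 0).card + (orb π i).card) := by
  unfold Pp
  have hdisj : Disjoint (orb π 0) (orb π i) :=
    orbs_pairwiseDisjoint π _ (orb_mem_orbs π 0) _ (orb_mem_orbs π i) (orb_zero_ne_orb_i h)
  have hmem_i : orb π i ∈ (orbs π).erase (orb π 0) :=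
    Finset.mem_erase.2 ⟨Ne.symm (orb_zero_ne_orb_i h), orb_mem_orbs π i⟩
  rw [orbs_swap_join hi h, Finset.prod_insert (union_not_mem_erased hi h),
    Finset.card_union_of_disjoint hdisj,
    ← Finset.mul_prod_erase _ _ (orb_mem_orbs π 0),
    ← Finset.mul_prod_erase _ _ hmem_i]
  ring
end Invariants

section MuTransitions

variable [NeZero n]

lemma card_eq_erase_add {α : Type*} [DecidableEq α] (s : Finset α) (a : α) :
    s.card = (s.erase a).card + if a ∈ s then 1 else 0 := by
  by_cases h : a ∈ s
  · rw [if_pos h, Finset.card_erase_of_mem h]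
    have := Finset.card_pos.2 ⟨a, h⟩
    omega
  · rw [if_neg h, Finset.erase_eq_of_notMem h, add_zero]

lemma Kk_swap (π : Perm (Fin n)) {i : Fin n} (hi : i ≠ 0) :
    Kk (π * Equiv.swap 0 i) + (if π i = i then 1 else 0)
      = Kk π + (if π 0 = i then 1 else 0) := by
  set τ := π * Equiv.swap 0 i with hτ
  set A := univ.filter (fun x => τ x = x ∧ x ≠ 0) with hA
  set B := univ.filter (fun x => π x = x ∧ x ≠ 0) with hB
  have hAB : A.erase i = B.erase i := by
    ext x
    simp only [hA, hB, Finset.mem_erase, Finset.mem_filter, Finset.mem_univ, true_and]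
    constructor
    · rintro ⟨hxi, hfix, hx0⟩
      rw [swap_apply_ne hx0 hxi] at hfix
      exact ⟨hxi, hfix, hx0⟩
    · rintro ⟨hxi, hfix, hx0⟩
      rw [← swap_apply_ne hx0 hxi] at hfix
      exact ⟨hxi, hfix, hx0⟩
  have hiA : i ∈ A ↔ π 0 = i := by
    simp only [hA, Finset.mem_filter, Finset.mem_univ, true_and]
    rw [swap_apply_i]
    exact ⟨fun h => h.1, fun h => ⟨h, hi⟩⟩
  have hiB : i ∈ B ↔ π i = i := by
    simp only [hB, Finset.mem_filter, Finset.mem_univ, true_and]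
    exact ⟨fun h => h.1, fun h => ⟨h, hi⟩⟩
  have h1 : A.card = (A.erase i).card + if i ∈ A then 1 else 0 := card_eq_erase_add A i
  have h2 : B.card = (B.erase i).card + if i ∈ B then 1 else 0 := card_eq_erase_add B i
  have e1 : (if i ∈ A then 1 else 0) = (if π 0 = i then 1 else 0) := by
    simp only [hiA]
  have e2 : (if i ∈ B then 1 else 0) = (if π i = i then 1 else 0) := by
    simp only [hiB]
  show A.card + _ = B.card + _
  rw [h1, h2, hAB, e1, e2]
  ring

lemma sc_of_apply {π : Perm (Fin n)} {i : Fin n} (h : π 0 = i) : π.SameCycle 0 i :=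
  ⟨1, by simpa using h⟩

lemma not_fixed_of_sc {π : Perm (Fin n)} {i : Fin n} (hi : i ≠ 0)
    (h : π.SameCycle 0 i) : π i ≠ i := by
  intro hfix
  have : (0 : Fin n) ∈ orb π i := mem_orb.2 h.symm
  rw [orb_fixed hfix] at this
  exact hi (Finset.mem_singleton.1 this).symm

lemma muZ_join {π : Perm (Fin n)} {i : Fin n} (hi : i ≠ 0) (h : ¬π.SameCycle 0 i) :
    muZ (π * Equiv.swap 0 i) = muZ π - 1 + 2 * (if π i = i then 1 else 0) := by
  have hM := Mn_swap_join hi h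
  have hK := Kk_swap π hi
  have h0i : π 0 ≠ i := fun hc => h (sc_of_apply hc)
  rw [if_neg h0i, add_zero] at hK
  unfold muZ
  have hMz : (Mn (π * Equiv.swap 0 i) : ℤ) = (Mn π : ℤ) - 1 := by
    omega
  have hKz : (Kk (π * Equiv.swap 0 i) : ℤ) + (if π i = i then 1 else 0) = (Kk π : ℤ) := by
    split_ifs with hf
    · rw [if_pos hf] at hK
      push_cast
      omega
    · rw [if_neg hf] at hK
      push_cast
      omega
  rw [hMz]
  omega

lemma muZ_split {π : Perm (Fin n)} {i : Fin n} (hi : i ≠ 0) (h : π.SameCycle 0 i) :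
    muZ (π * Equiv.swap 0 i) = muZ π + 1 - 2 * (if π 0 = i then 1 else 0) := by
  set τ := π * Equiv.swap 0 i with hτ
  have hS : ¬τ.SameCycle 0 i := not_sameCycle_swap_of hi h
  have hM := Mn_swap_join (π := τ) hi hS
  rw [mul_swap_swap] at hM
  have hK := Kk_swap π hi
  rw [if_neg (not_fixed_of_sc hi h), add_zero] at hK
  rw [← hτ] at hK
  unfold muZ
  have hKz : (Kk τ : ℤ) = (Kk π : ℤ) + (if π 0 = i then 1 else 0) := by
    split_ifs with hf
    · rw [if_pos hf] at hK; push_cast; omega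
    · rw [if_neg hf] at hK; push_cast; omega
  omega

lemma Kk_add_one_le_Mn (π : Perm (Fin n)) : Kk π + 1 ≤ Mn π := by
  have hsub : (univ.filter fun x => π x = x ∧ x ≠ 0).image (fun x => ({x} : Finset (Fin n)))
      ⊆ (orbs π).erase (orb π 0) := by
    intro O hO
    obtain ⟨x, hx, rfl⟩ := Finset.mem_image.1 hO
    obtain ⟨hfix, hx0⟩ := (Finset.mem_filter.1 hx).2
    rw [Finset.mem_erase]
    constructor
    · intro hc
      have h0 : (0 : Fin n) ∈ orb π 0 := self_mem_orb π 0
      rw [← hc, Finset.mem_singleton] at h0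
      exact hx0 h0.symm
    · rw [← orb_fixed hfix]; exact orb_mem_orbs π x
  have h1 : Kk π ≤ ((orbs π).erase (orb π 0)).card := by
    rw [show Kk π = ((univ.filter fun x => π x = x ∧ x ≠ 0).image
        (fun x => ({x} : Finset (Fin n)))).card from ?_]
    · exact Finset.card_le_card hsub
    · rw [Finset.card_image_of_injective _
        (fun a b h => by simpa using Finset.singleton_injective h)]
      rfl
  have h2 := Finset.card_erase_of_mem (orb_mem_orbs π 0)
  have h3 := Finset.card_pos.2 ⟨orb π 0, orb_mem_orbs π 0⟩
  unfold Mn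
  omega

lemma muZ_nonneg (π : Perm (Fin n)) : 0 ≤ muZ π := by
  have h1 := Kk_add_one_le_Mn π
  have h2 : (orbs π).card ≤ n := card_orbs_le π
  unfold muZ Mn at h1 ⊢
  omega

lemma eq_one_of_muZ_eq_zero {π : Perm (Fin n)} (h : muZ π = 0) : π = 1 := by
  have h1 := Kk_add_one_le_Mn π
  have h2 : Mn π ≤ n := by unfold Mn; exact card_orbs_le π
  have hMn : Mn π = n := by unfold muZ at h; omega
  ext x
  simp only [Perm.one_apply]
  by_contra hx
  have hx' : π x ≠ x := fun hc => hx (congrArg Fin.val hc)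
  have hcard2 : 2 ≤ (orb π x).card := by
    apply Finset.one_lt_card.2
    exact ⟨x, self_mem_orb π x, π x, apply_mem_orb π (self_mem_orb π x), fun hc => hx' hc.symm⟩
  have hsum := sum_orbs_card π
  have hsplit : (orb π x).card + ∑ O ∈ (orbs π).erase (orb π x), O.card
      = ∑ O ∈ orbs π, O.card := Finset.add_sum_erase (orbs π) _ (orb_mem_orbs π x)
  have hge : ((orbs π).erase (orb π x)).card ≤ ∑ O ∈ (orbs π).erase (orb π x), O.card := by
    calc ((orbs π).erase (orb π x)).card = ∑ O ∈ (orbs π).erase (orb π x), 1 := by simp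
    _ ≤ _ := Finset.sum_le_sum fun O hO => by
        obtain ⟨y, rfl⟩ := mem_orbs.1 (Finset.mem_of_mem_erase hO)
        exact orb_card_pos π y
  have hce := Finset.card_erase_of_mem (orb_mem_orbs π x)
  have hpos : 0 < (orbs π).card := Finset.card_pos.2 ⟨orb π x, orb_mem_orbs π x⟩
  unfold Mn at hMn
  omega

lemma muZ_one : muZ (1 : Perm (Fin n)) = 0 := by
  have hMn : Mn (1 : Perm (Fin n)) = n := by
    unfold Mn orbs
    have : orb (1 : Perm (Fin n)) = fun x => ({x} : Finset (Fin n)) := by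
      funext x
      exact orb_fixed rfl
    rw [this, Finset.card_image_of_injective _
      (fun a b h => by simpa using Finset.singleton_injective h)]
    simp
  have hKk : Kk (1 : Perm (Fin n)) = n - 1 := by
    unfold Kk
    simp only [Perm.one_apply, true_and]
    rw [Finset.filter_ne' univ 0, Finset.card_erase_of_mem (Finset.mem_univ 0)]
    simp
  have hn : 1 ≤ n := NeZero.one_le
  unfold muZ
  rw [hMn, hKk]
  push_cast [Nat.cast_sub hn]
  ring

end MuTransitions

section Counting

variable [NeZero n]

def FS (π : Perm (Fin n)) (L : ℕ) : Set (List (Perm (Fin n))) :=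
  {l | IsStarFactorization π l ∧ l.length = L}

lemma FS_finite (π : Perm (Fin n)) (L : ℕ) : (FS π L).Finite :=
  (List.finite_length_eq _ L).subset fun _ hl => hl.2

lemma lower_bound : ∀ (l : List (Perm (Fin n))) (π : Perm (Fin n)),
    IsStarFactorization π l → muZ π ≤ l.length := by
  intro l
  induction l using List.reverseRecOn with
  | nil =>
      intro π h
      have h1 : π = 1 := by
        have := h.2
        simpa using this.symm
      rw [h1, muZ_one]
      simp
  | append_singleton l τ ih =>
      intro π h
      have hmem : τ ∈ l ++ [τ] := by simp
      obtain ⟨i, hi, rfl⟩ := h.1 τ hmem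
      have hprod : l.prod = π * Equiv.swap 0 i := by
        have h2 := h.2
        rw [List.prod_append, List.prod_singleton] at h2
        rw [← h2, mul_assoc, Equiv.swap_mul_self, mul_one]
      have hstar : IsStarList l := fun σ hσ => h.1 σ (by simp [hσ])
      have hih := ih (π * Equiv.swap 0 i) ⟨hstar, hprod⟩
      have hstep : muZ π - 1 ≤ muZ (π * Equiv.swap 0 i) := by
        by_cases hsc : π.SameCycle 0 i
        · rw [muZ_split hi hsc]; split_ifs <;> omega
        · rw [muZ_join hi hsc]; split_ifs <;> omega
      rw [List.length_append, List.length_singleton]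
      push_cast
      omega

lemma ncard_biUnion {ι β : Type*} (s : Finset ι) (f : ι → Set β)
    (hfin : ∀ i ∈ s, (f i).Finite)
    (hdisj : ∀ i ∈ s, ∀ j ∈ s, i ≠ j → Disjoint (f i) (f j)) :
    (⋃ i ∈ s, f i).ncard = ∑ i ∈ s, (f i).ncard := by
  classical
  induction s using Finset.induction with
  | empty => simp
  | @insert a s ha ih =>
      rw [Finset.sum_insert ha, Finset.set_biUnion_insert]
      have hdisj2 : Disjoint (f a) (⋃ i ∈ s, f i) := by
        rw [Set.disjoint_iUnion_right]
        intro i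
        rw [Set.disjoint_iUnion_right]
        intro hi
        exact hdisj a (Finset.mem_insert_self a s) i (Finset.mem_insert_of_mem hi)
          (fun hc => ha (hc ▸ hi))
      have hfin2 : (⋃ i ∈ s, f i).Finite :=
        Set.Finite.biUnion s.finite_toSet (fun i hi => hfin i (Finset.mem_insert_of_mem hi))
      rw [Set.ncard_union_eq hdisj2 (hfin a (Finset.mem_insert_self a s)) hfin2]
      rw [ih (fun i hi => hfin i (Finset.mem_insert_of_mem hi))
        (fun i hi j hj hij => hdisj i (Finset.mem_insert_of_mem hi) j
          (Finset.mem_insert_of_mem hj) hij)]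

lemma FS_succ (π : Perm (Fin n)) (L : ℕ) :
    FS π (L + 1) = ⋃ i ∈ (univ.erase (0 : Fin n)),
      (fun l => l ++ [Equiv.swap 0 i]) '' FS (π * Equiv.swap 0 i) L := by
  ext l
  simp only [Set.mem_iUnion, Set.mem_image, exists_prop]
  constructor
  · rintro ⟨⟨hstar, hprod⟩, hlen⟩
    have hne : l ≠ [] := by intro hc; rw [hc] at hlen; simp at hlen
    obtain ⟨l', τ, rfl⟩ := (List.eq_nil_or_concat l).resolve_left hne
    simp only [List.concat_eq_append] at hstar hprod hlen ⊢
    have hmem : τ ∈ l' ++ [τ] := by simp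
    obtain ⟨i, hi, rfl⟩ := hstar τ hmem
    refine ⟨i, Finset.mem_erase.2 ⟨hi, Finset.mem_univ i⟩, l', ⟨⟨?_, ?_⟩, ?_⟩, rfl⟩
    · exact fun σ hσ => hstar σ (by simp [hσ])
    · rw [List.prod_append, List.prod_singleton] at hprod
      rw [← hprod, mul_assoc, Equiv.swap_mul_self, mul_one]
    · have := hlen
      rw [List.length_append, List.length_singleton] at this
      omega
  · rintro ⟨i, hi, l', ⟨⟨hstar, hprod⟩, hlen⟩, rfl⟩
    have hi' : i ≠ 0 := (Finset.mem_erase.1 hi).1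
    refine ⟨⟨?_, ?_⟩, ?_⟩
    · intro σ hσ
      rcases List.mem_append.1 hσ with h | h
      · exact hstar σ h
      · exact ⟨i, hi', (List.mem_singleton.1 h)⟩
    · rw [List.prod_append, List.prod_singleton, hprod, mul_swap_swap]
    · rw [List.length_append, List.length_singleton, hlen]

lemma swap_zero_injective {i j : Fin n} (h : Equiv.swap (0 : Fin n) i = Equiv.swap 0 j) :
    i = j := by
  have := congrArg (fun σ : Perm (Fin n) => σ 0) h
  simpa using this

lemma FS_card_succ (π : Perm (Fin n)) (L : ℕ) :
    (FS π (L + 1)).ncard = ∑ i ∈ univ.erase (0 : Fin n),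
      (FS (π * Equiv.swap 0 i) L).ncard := by
  rw [FS_succ]
  rw [ncard_biUnion]
  · apply Finset.sum_congr rfl
    intro i _
    apply Set.ncard_image_of_injective
    intro l₁ l₂ h
    exact List.append_cancel_right h
  · intro i _
    exact (FS_finite _ L).image _
  · intro i _ j _ hij
    rw [Set.disjoint_left]
    rintro l ⟨l₁, -, rfl⟩ ⟨l₂, -, hl₂⟩
    have h2 : Equiv.swap (0 : Fin n) j = Equiv.swap 0 i := by
      have := congrArg List.getLast? hl₂
      simpa using this
    exact hij (swap_zero_injective h2.symm)

end Counting

section MainAux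

variable [NeZero n]

lemma Kk_le (π : Perm (Fin n)) : Kk π + 1 ≤ n := by
  have h : (univ.filter fun x => π x = x ∧ x ≠ 0) ⊆ univ.erase (0 : Fin n) := by
    intro x hx
    exact Finset.mem_erase.2 ⟨(Finset.mem_filter.1 hx).2.2, Finset.mem_univ x⟩
  have h2 := Finset.card_le_card h
  rw [Finset.card_erase_of_mem (Finset.mem_univ 0), Finset.card_univ, Fintype.card_fin] at h2
  have := NeZero.one_le (n := n)
  unfold Kk
  omega

lemma Pp_pos (π : Perm (Fin n)) : 0 < Pp π := by
  apply Finset.prod_pos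
  intro O hO
  obtain ⟨x, rfl⟩ := mem_orbs.1 hO
  exact orb_card_pos π x

lemma Kk_one : Kk (1 : Perm (Fin n)) = n - 1 := by
  unfold Kk
  simp only [Perm.one_apply, true_and]
  rw [Finset.filter_ne' univ 0, Finset.card_erase_of_mem (Finset.mem_univ 0)]
  simp

lemma Pp_one : Pp (1 : Perm (Fin n)) = 1 := by
  apply Finset.prod_eq_one
  intro O hO
  obtain ⟨x, rfl⟩ := mem_orbs.1 hO
  rw [orb_fixed rfl]
  simp

lemma FS_one_zero : FS (1 : Perm (Fin n)) 0 = {([] : List (Perm (Fin n)))} := by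
  ext l
  simp only [FS, Set.mem_setOf_eq, Set.mem_singleton_iff]
  constructor
  · rintro ⟨-, hlen⟩
    exact List.length_eq_zero_iff.1 hlen
  · rintro rfl
    exact ⟨⟨fun τ hτ => absurd hτ List.not_mem_nil, List.prod_nil⟩, rfl⟩

/-- the set of non-fixed points outside the cycle of 0 -/
def G2 (π : Perm (Fin n)) : Finset (Fin n) :=
  univ.filter (fun i => ¬π.SameCycle 0 i ∧ π i ≠ i)

/-- nontrivial orbits other than the orbit of 0 -/
def C2 (π : Perm (Fin n)) : Finset (Finset (Fin n)) :=
  ((orbs π).erase (orb π 0)).filter (fun O => 1 < O.card)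

lemma G2_eq_biUnion (π : Perm (Fin n)) : G2 π = (C2 π).biUnion id := by
  ext i
  simp only [G2, C2, Finset.mem_filter, Finset.mem_univ, true_and, Finset.mem_biUnion,
    Finset.mem_erase, id]
  constructor
  · rintro ⟨hsc, hfix⟩
    refine ⟨orb π i, ⟨⟨?_, orb_mem_orbs π i⟩, ?_⟩, self_mem_orb π i⟩
    · intro hc
      exact hsc (mem_orb.1 (show i ∈ orb π 0 by rw [← hc]; exact self_mem_orb π i))
    · apply Finset.one_lt_card.2
      exact ⟨i, self_mem_orb π i, π i, apply_mem_orb π (self_mem_orb π i),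
        fun hc => hfix hc.symm⟩
  · rintro ⟨O, ⟨⟨hne0, hO⟩, hcard⟩, hi⟩
    have horb : orb π i = O := orb_eq_of_mem_orbs hO hi
    constructor
    · intro hsc
      exact hne0 (horb ▸ (orb_eq_of_sameCycle hsc).symm ▸ rfl)
    · intro hfix
      rw [orb_fixed hfix] at horb
      rw [← horb] at hcard
      simp at hcard
  
lemma orb_mem_C2 {π : Perm (Fin n)} {i : Fin n} (hi : i ∈ G2 π) : orb π i ∈ C2 π := by
  obtain ⟨hsc, hfix⟩ := (Finset.mem_filter.1 hi).2
  simp only [C2, Finset.mem_filter, Finset.mem_erase]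
  refine ⟨⟨?_, orb_mem_orbs π i⟩, ?_⟩
  · intro hc
    exact hsc (mem_orb.1 (show i ∈ orb π 0 by rw [← hc]; exact self_mem_orb π i))
  · exact Finset.one_lt_card.2 ⟨i, self_mem_orb π i, π i,
      apply_mem_orb π (self_mem_orb π i), fun hc => hfix hc.symm⟩

lemma small_erase_eq (π : Perm (Fin n)) :
    ((orbs π).erase (orb π 0)).filter (fun O => ¬ 1 < O.card)
      = (univ.filter fun x => π x = x ∧ x ≠ 0).image (fun x => ({x} : Finset (Fin n))) := by
  ext O
  simp only [Finset.mem_filter, Finset.mem_erase, Finset.mem_image, Finset.mem_univ, true_and]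
  constructor
  · rintro ⟨⟨hne, hO⟩, hcard⟩
    obtain ⟨x, rfl⟩ := mem_orbs.1 hO
    push_neg at hcard
    have hfix := fixed_of_orb_singleton hcard
    refine ⟨x, ⟨hfix, ?_⟩, (orb_fixed hfix).symm⟩
    rintro rfl
    exact hne rfl
  · rintro ⟨x, ⟨hfix, hx0⟩, rfl⟩
    refine ⟨⟨?_, ?_⟩, by simp⟩
    · intro hc
      have h0 : (0 : Fin n) ∈ orb π 0 := self_mem_orb π 0
      rw [← hc, Finset.mem_singleton] at h0
      exact hx0 h0.symm
    · rw [← orb_fixed hfix]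
      exact orb_mem_orbs π x

lemma card_C2 (π : Perm (Fin n)) : (C2 π).card + 1 + Kk π = Mn π := by
  have hsplit := Finset.card_filter_add_card_filter_not
    (s := (orbs π).erase (orb π 0)) (p := fun O => 1 < O.card)
  have hsmall : (((orbs π).erase (orb π 0)).filter (fun O => ¬ 1 < O.card)).card = Kk π := by
    rw [small_erase_eq]
    rw [Finset.card_image_of_injective _
      (fun a b h => by simpa using Finset.singleton_injective h)]
    rfl
  have hce := Finset.card_erase_of_mem (orb_mem_orbs π 0)
  have hpos : 0 < (orbs π).card := Finset.card_pos.2 ⟨orb π 0, orb_mem_orbs π 0⟩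
  unfold Mn C2
  omega

lemma sum_card_C2 (π : Perm (Fin n)) : ∑ O ∈ C2 π, O.card = (G2 π).card := by
  rw [G2_eq_biUnion, Finset.card_biUnion (s := C2 π) (t := id) (fun O₁ h₁ O₂ h₂ hne =>
    orbs_pairwiseDisjoint π O₁
      (Finset.mem_of_mem_erase (Finset.mem_filter.1 h₁).1) O₂
      (Finset.mem_of_mem_erase (Finset.mem_filter.1 h₂).1) hne)]
  rfl

lemma card_partition (π : Perm (Fin n)) :
    n = (orb π 0).card + Kk π + (G2 π).card := by
  have hsum := sum_orbs_card π
  have hsplit : (orb π 0).card + ∑ O ∈ (orbs π).erase (orb π 0), O.card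
      = ∑ O ∈ orbs π, O.card := Finset.add_sum_erase (orbs π) _ (orb_mem_orbs π 0)
  have hsplit2 := Finset.sum_filter_add_sum_filter_not
    ((orbs π).erase (orb π 0)) (fun O => 1 < O.card) (fun O => O.card)
  have hsmall : ∑ O ∈ ((orbs π).erase (orb π 0)).filter (fun O => ¬ 1 < O.card), O.card
      = Kk π := by
    rw [Finset.sum_congr rfl (fun O hO => ?_), Finset.sum_const, smul_eq_mul, mul_one]
    · rw [small_erase_eq]
      rw [Finset.card_image_of_injective _
        (fun a b h => by simpa using Finset.singleton_injective h)]
      rfl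
    · show O.card = 1
      obtain ⟨hOe, hcard⟩ := Finset.mem_filter.1 hO
      obtain ⟨x, rfl⟩ := mem_orbs.1 (Finset.mem_of_mem_erase hOe)
      have := orb_card_pos π x
      omega
  have hg2 := sum_card_C2 π
  unfold C2 at hg2
  omega

end MainAux

section Main

variable [NeZero n]

noncomputable def Fq (π : Perm (Fin n)) : ℚ :=
  ((muZ π).toNat.factorial * Pp π : ℚ) / ((n - Kk π).factorial : ℚ)

lemma sum_inv_orb (π : Perm (Fin n)) :
    ∑ i ∈ G2 π, ((orb π i).card : ℚ)⁻¹ = (C2 π).card := by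
  rw [G2_eq_biUnion]
  have hdisjoint : Set.PairwiseDisjoint ↑(C2 π) (id : Finset (Fin n) → Finset (Fin n)) :=
    fun O₁ h₁ O₂ h₂ hne => orbs_pairwiseDisjoint π O₁
      (Finset.mem_of_mem_erase (Finset.mem_filter.1 (Finset.mem_coe.1 h₁)).1) O₂
      (Finset.mem_of_mem_erase (Finset.mem_filter.1 (Finset.mem_coe.1 h₂)).1) hne
  rw [Finset.sum_biUnion hdisjoint]
  rw [Finset.sum_congr rfl (fun O hO => ?_), Finset.sum_const, nsmul_eq_mul, mul_one]
  show ∑ i ∈ id O, ((orb π i).card : ℚ)⁻¹ = 1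
  have hOmem : O ∈ orbs π := Finset.mem_of_mem_erase (Finset.mem_filter.1 hO).1
  have hpos : 0 < O.card := by
    obtain ⟨x, rfl⟩ := mem_orbs.1 hOmem
    exact orb_card_pos π x
  have : ∀ i ∈ O, ((orb π i).card : ℚ)⁻¹ = (O.card : ℚ)⁻¹ := by
    intro i hi
    rw [orb_eq_of_mem_orbs hOmem hi]
  rw [show (id O : Finset (Fin n)) = O from rfl, Finset.sum_congr rfl this, Finset.sum_const,
    nsmul_eq_mul]
  rw [mul_inv_cancel₀]
  exact_mod_cast hpos.ne'

lemma Pp_term_eq {π : Perm (Fin n)} {i : Fin n} (hi : i ∈ G2 π) :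
    (Pp (π * Equiv.swap 0 i) : ℚ)
      = Pp π * ((orb π i).card : ℚ)⁻¹ + Pp π * ((orb π 0).card : ℚ)⁻¹ := by
  obtain ⟨hsc, hfix⟩ := (Finset.mem_filter.1 (hi : i ∈ G2 π)).2
  have hi0 : i ≠ 0 := by rintro rfl; exact hsc (SameCycle.refl _ _)
  have hP := Pp_swap_join hi0 hsc
  have hs0 : ((orb π 0).card : ℚ) ≠ 0 := by
    exact_mod_cast (orb_card_pos π 0).ne'
  have hsi : ((orb π i).card : ℚ) ≠ 0 := by
    exact_mod_cast (orb_card_pos π i).ne'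
  have hPq : (Pp (π * Equiv.swap 0 i) : ℚ) * ((orb π 0).card * (orb π i).card)
      = Pp π * ((orb π 0).card + (orb π i).card) := by exact_mod_cast hP
  field_simp
  linear_combination hPq

lemma sum_Pp_G2 (π : Perm (Fin n)) :
    ∑ i ∈ G2 π, (Pp (π * Equiv.swap 0 i) : ℚ)
      = Pp π * (C2 π).card + Pp π * (G2 π).card * ((orb π 0).card : ℚ)⁻¹ := by
  rw [Finset.sum_congr rfl (fun i hi => Pp_term_eq hi), Finset.sum_add_distrib,
    ← Finset.mul_sum, sum_inv_orb, Finset.sum_const, nsmul_eq_mul]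
  ring

lemma main_count : ∀ (N : ℕ) (π : Perm (Fin n)), (muZ π).toNat = N →
    ((FS π (muZ π).toNat).ncard : ℚ) = Fq π := by
  intro N
  induction N using Nat.strong_induction_on with
  | _ N ih =>
  intro π hN
  by_cases hone : π = 1
  · subst hone
    rw [muZ_one]
    simp only [Int.toNat_zero]
    rw [FS_one_zero, Set.ncard_singleton]
    unfold Fq
    rw [muZ_one, Pp_one, Kk_one]
    have h1 : n - (n - 1) = 1 := by have := NeZero.one_le (n := n); omega
    rw [h1]
    simp [Nat.factorial]
  -- inductive step
  set m0 := (muZ π).toNat with hm0def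
  have hμnn : 0 ≤ muZ π := muZ_nonneg π
  have hm0eq : (m0 : ℤ) = muZ π := Int.toNat_of_nonneg hμnn
  have hm0pos : 1 ≤ m0 := by
    rcases Nat.eq_zero_or_pos m0 with h | h
    · exfalso
      exact hone (eq_one_of_muZ_eq_zero (by omega))
    · exact h
  -- generic facts about good indices
  have htoNat : ∀ i : Fin n, muZ (π * Equiv.swap 0 i) = muZ π - 1 →
      (muZ (π * Equiv.swap 0 i)).toNat = m0 - 1 := by
    intro i hμ
    omega
  have hcount : ∀ i : Fin n, i ≠ 0 → muZ (π * Equiv.swap 0 i) = muZ π - 1 →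
      ((FS (π * Equiv.swap 0 i) (m0 - 1)).ncard : ℚ) = Fq (π * Equiv.swap 0 i) := by
    intro i hi hμ
    have ht := htoNat i hμ
    rw [← ht]
    exact ih (m0 - 1) (by omega) _ ht
  have hbad : ∀ i : Fin n, i ≠ 0 → i ∉ G2 π → i ≠ π 0 →
      (FS (π * Equiv.swap 0 i) (m0 - 1)).ncard = 0 := by
    intro i hi hiG2 hiπ0
    have hμ : muZ (π * Equiv.swap 0 i) = muZ π + 1 := by
      by_cases hsc : π.SameCycle 0 i
      · rw [muZ_split hi hsc, if_neg (fun hc => hiπ0 hc.symm)]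
        ring
      · have hfix : π i = i := by
          by_contra hfix
          exact hiG2 (Finset.mem_filter.2 ⟨Finset.mem_univ i, hsc, hfix⟩)
        rw [muZ_join hi hsc, if_pos hfix]
        ring
    have hempty : FS (π * Equiv.swap 0 i) (m0 - 1) = ∅ := by
      rw [Set.eq_empty_iff_forall_notMem]
      rintro l ⟨hfact, hlen⟩
      have := lower_bound l _ hfact
      rw [hlen] at this
      have hc : ((m0 - 1 : ℕ) : ℤ) = (m0 : ℤ) - 1 := by omega
      omega
    rw [hempty, Set.ncard_empty]
  -- the sum decomposition
  have hsum0 : ((FS π m0).ncard : ℚ)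
      = ∑ i ∈ univ.erase (0 : Fin n), ((FS (π * Equiv.swap 0 i) (m0 - 1)).ncard : ℚ) := by
    rw [show m0 = (m0 - 1) + 1 by omega, FS_card_succ]
    push_cast
    rfl
  -- facts for G2 terms
  have hG2sub : G2 π ⊆ univ.erase (0 : Fin n) := by
    intro i hi
    obtain ⟨hsc, -⟩ := (Finset.mem_filter.1 hi).2
    exact Finset.mem_erase.2 ⟨by rintro rfl; exact hsc (SameCycle.refl _ _), Finset.mem_univ i⟩
  have hπ0G2 : ∀ i ∈ G2 π, π 0 ≠ i := by
    intro i hi hc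
    exact (Finset.mem_filter.1 hi).2.1 (sc_of_apply hc)
  have hμG2 : ∀ i ∈ G2 π, muZ (π * Equiv.swap 0 i) = muZ π - 1 := by
    intro i hi
    obtain ⟨hsc, hfix⟩ := (Finset.mem_filter.1 hi).2
    have hi0 : i ≠ 0 := (Finset.mem_erase.1 (hG2sub hi)).1
    rw [muZ_join hi0 hsc, if_neg hfix]
    ring
  have hKkG2 : ∀ i ∈ G2 π, Kk (π * Equiv.swap 0 i) = Kk π := by
    intro i hi
    obtain ⟨hsc, hfix⟩ := (Finset.mem_filter.1 hi).2
    have hi0 : i ≠ 0 := (Finset.mem_erase.1 (hG2sub hi)).1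
    have := Kk_swap π hi0
    rw [if_neg hfix, if_neg (hπ0G2 i hi), add_zero, add_zero] at this
    exact this
  have hFqG2 : ∀ i ∈ G2 π, Fq (π * Equiv.swap 0 i)
      = ((m0 - 1).factorial : ℚ) / ((n - Kk π).factorial : ℚ) * (Pp (π * Equiv.swap 0 i)) := by
    intro i hi
    have hi0 : i ≠ 0 := (Finset.mem_erase.1 (hG2sub hi)).1
    unfold Fq
    rw [htoNat i (hμG2 i hi), hKkG2 i hi]
    push_cast
    ring
  -- final algebra
  have hFqdef : Fq π = ((m0.factorial * Pp π : ℕ) : ℚ) / (((n - Kk π).factorial : ℕ) : ℚ) := by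
    unfold Fq
    rw [← hm0def]
    push_cast
    ring
  have hsumG2 : ∑ i ∈ G2 π, ((FS (π * Equiv.swap 0 i) (m0 - 1)).ncard : ℚ)
      = ((m0 - 1).factorial : ℚ) / ((n - Kk π).factorial : ℚ)
        * (Pp π * (C2 π).card + Pp π * (G2 π).card * ((orb π 0).card : ℚ)⁻¹) := by
    rw [Finset.sum_congr rfl (fun i hi => ?_), ← Finset.mul_sum, sum_Pp_G2]
    rw [hcount i (Finset.mem_erase.1 (hG2sub hi)).1 (hμG2 i hi), hFqG2 i hi]
  -- cast facts
  have hKn : Kk π + 1 ≤ n := Kk_le π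
  have e1 : ((n - Kk π : ℕ) : ℚ) = (n : ℚ) - (Kk π : ℚ) := by
    push_cast [Nat.cast_sub (by omega : Kk π ≤ n)]
    ring
  have e3 : ((C2 π).card : ℚ) = (Mn π : ℚ) - 1 - (Kk π : ℚ) := by
    have := card_C2 π
    have h := congrArg (fun x : ℕ => (x : ℚ)) this
    push_cast at h
    linarith
  have e5 : (m0 : ℚ) = (n : ℚ) + (Mn π : ℚ) - 2 * (Kk π : ℚ) - 2 := by
    have h : (m0 : ℤ) = (n : ℤ) + (Mn π : ℤ) - 2 * (Kk π : ℤ) - 2 := by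
      rw [hm0eq]; rfl
    exact_mod_cast h
  have e8 : (m0.factorial : ℚ) = (m0 : ℚ) * ((m0 - 1).factorial : ℚ) := by
    have h := Nat.factorial_succ (m0 - 1)
    rw [show m0 - 1 + 1 = m0 by omega] at h
    rw [h]
    push_cast [show m0 - 1 + 1 = m0 by omega]
    ring
  have hfactne : (((n - Kk π).factorial : ℕ) : ℚ) ≠ 0 := by
    exact_mod_cast (Nat.factorial_pos _).ne'
  by_cases hπ0 : π 0 = 0
  · -- 0 is a fixed point
    have hsumAll : ∑ i ∈ univ.erase (0 : Fin n),
        ((FS (π * Equiv.swap 0 i) (m0 - 1)).ncard : ℚ)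
        = ∑ i ∈ G2 π, ((FS (π * Equiv.swap 0 i) (m0 - 1)).ncard : ℚ) := by
      symm
      apply Finset.sum_subset hG2sub
      intro i hi hiG2
      rw [hbad i (Finset.mem_erase.1 hi).1 hiG2
        (by rw [hπ0]; exact (Finset.mem_erase.1 hi).1)]
      simp
    have hs0 : ((orb π 0).card : ℚ) = 1 := by
      rw [orb_fixed hπ0]
      simp
    have e4 : ((G2 π).card : ℚ) = (n : ℚ) - 1 - (Kk π : ℚ) := by
      have := card_partition π
      rw [orb_fixed hπ0, Finset.card_singleton] at this
      have h := congrArg (fun x : ℕ => (x : ℚ)) this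
      push_cast at h
      linarith
    rw [hsum0, hsumAll, hsumG2, hFqdef, hs0, e3, e4]
    push_cast
    rw [e8, e5]
    field_simp
    ring
  · -- 0 is moved; the extra index π 0
    have hsc0 : π.SameCycle 0 (π 0) := sc_of_apply rfl
    have hμstar : muZ (π * Equiv.swap 0 (π 0)) = muZ π - 1 := by
      rw [muZ_split hπ0 hsc0, if_pos rfl]
      ring
    have hKstar : Kk (π * Equiv.swap 0 (π 0)) = Kk π + 1 := by
      have h := Kk_swap π hπ0
      rw [if_pos rfl, if_neg (not_fixed_of_sc hπ0 hsc0), add_zero] at h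
      exact h
    set τ := π * Equiv.swap 0 (π 0) with hτdef
    have hSτ : ¬τ.SameCycle 0 (π 0) := not_sameCycle_swap_of hπ0 hsc0
    have hfixstar : τ (π 0) = π 0 := by
      rw [hτdef, swap_apply_i]
    have hPp := Pp_swap_join (π := τ) hπ0 hSτ
    rw [show τ * Equiv.swap 0 (π 0) = π from by rw [hτdef, mul_swap_swap]] at hPp
    rw [orb_fixed hfixstar, Finset.card_singleton] at hPp
    have hsplit0 : orb π 0 = orb τ 0 ∪ orb τ (π 0) := by
      have h := orb_swap_zero_join (π := τ) hπ0 hSτ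
      rw [show τ * Equiv.swap 0 (π 0) = π from by rw [hτdef, mul_swap_swap]] at h
      exact h
    have hs0card : (orb π 0).card = (orb τ 0).card + 1 := by
      rw [hsplit0, Finset.card_union_of_disjoint (orbs_pairwiseDisjoint τ _
        (orb_mem_orbs τ 0) _ (orb_mem_orbs τ (π 0)) (orb_zero_ne_orb_i hSτ)),
        orb_fixed hfixstar, Finset.card_singleton]
    have hcntStar : ((FS τ (m0 - 1)).ncard : ℚ) = Fq τ := hcount (π 0) hπ0 hμstar
    have hFqStar : Fq τ = ((m0 - 1).factorial : ℚ) * (Pp τ : ℚ)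
        / (((n - Kk π - 1).factorial : ℕ) : ℚ) := by
      unfold Fq
      rw [htoNat (π 0) hμstar, hKstar, show n - (Kk π + 1) = n - Kk π - 1 from by omega]
    have hπ0G2' : π 0 ∉ G2 π := fun hc => hπ0G2 _ hc rfl
    have hsumAll : ∑ i ∈ univ.erase (0 : Fin n),
        ((FS (π * Equiv.swap 0 i) (m0 - 1)).ncard : ℚ)
        = ((FS τ (m0 - 1)).ncard : ℚ)
          + ∑ i ∈ G2 π, ((FS (π * Equiv.swap 0 i) (m0 - 1)).ncard : ℚ) := by
      rw [← Finset.sum_insert (s := G2 π)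
        (f := fun i => ((FS (π * Equiv.swap 0 i) (m0 - 1)).ncard : ℚ)) hπ0G2']
      symm
      apply Finset.sum_subset
      · intro i hi
        rcases Finset.mem_insert.1 hi with rfl | hi
        · exact Finset.mem_erase.2 ⟨hπ0, Finset.mem_univ _⟩
        · exact hG2sub hi
      · intro i hi hins
        rw [hbad i (Finset.mem_erase.1 hi).1
          (fun hc => hins (Finset.mem_insert_of_mem hc))
          (fun hc => hins (by rw [hc]; exact Finset.mem_insert_self _ _))]
        simp
    -- remaining scalar identity
    have e2 : ((orb τ 0).card : ℚ) = ((orb π 0).card : ℚ) - 1 := by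
      have h := congrArg (fun x : ℕ => (x : ℚ)) hs0card
      push_cast at h
      linarith
    have e4 : ((G2 π).card : ℚ) = (n : ℚ) - ((orb π 0).card : ℚ) - (Kk π : ℚ) := by
      have := card_partition π
      have h := congrArg (fun x : ℕ => (x : ℚ)) this
      push_cast at h
      linarith
    have e6 : (Pp τ : ℚ) * ((orb π 0).card : ℚ) = (Pp π : ℚ) * ((orb τ 0).card : ℚ) := by
      have h := congrArg (fun x : ℕ => (x : ℚ)) hPp
      push_cast at h
      rw [show ((orb π 0).card : ℚ) = ((orb τ 0).card : ℚ) + 1 from by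
        exact_mod_cast congrArg (fun x : ℕ => (x : ℚ)) hs0card]
      linear_combination -h
    have hs0q : ((orb π 0).card : ℚ) ≠ 0 := by
      exact_mod_cast (orb_card_pos π 0).ne'
    have e7 : (((n - Kk π).factorial : ℕ) : ℚ)
        = ((n : ℚ) - (Kk π : ℚ)) * (((n - Kk π - 1).factorial : ℕ) : ℚ) := by
      have h1 : n - Kk π = (n - Kk π - 1) + 1 := by omega
      rw [h1, Nat.factorial_succ]
      push_cast
      rw [show ((n - Kk π - 1 : ℕ) : ℚ) = (n : ℚ) - Kk π - 1 from by
        rw [Nat.cast_sub (show 1 ≤ n - Kk π by omega), Nat.cast_sub (show Kk π ≤ n by omega)]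
        push_cast
        ring]
      ring
    have hfactne2 : (((n - Kk π - 1).factorial : ℕ) : ℚ) ≠ 0 := by
      exact_mod_cast (Nat.factorial_pos _).ne'
    have hePτ : (Pp τ : ℚ) = (Pp π : ℚ) * (((orb π 0).card : ℚ) - 1)
        / ((orb π 0).card : ℚ) := by
      rw [eq_div_iff hs0q, ← e2]
      linarith [e6]
    have hnK : ((n : ℚ) - (Kk π : ℚ)) ≠ 0 := by
      have : (Kk π : ℚ) + 1 ≤ (n : ℚ) := by exact_mod_cast hKn
      linarith
    rw [hsum0, hsumAll, hsumG2, hcntStar, hFqStar, hFqdef, hePτ, e3, e4]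
    push_cast
    rw [e8, e5, e7]
    rw [show ((Mn π : ℕ) : ℚ) = ((Mn π : ℕ) : ℚ) from rfl]
    generalize hF : (((m0 - 1).factorial : ℕ) : ℚ) = F
    generalize hA : (((n - Kk π - 1).factorial : ℕ) : ℚ) = A at hfactne2
    generalize hP : ((Pp π : ℕ) : ℚ) = P
    generalize hs : (((orb π 0).card : ℕ) : ℚ) = s at hs0q
    generalize hM : ((Mn π : ℕ) : ℚ) = M
    generalize hk : ((Kk π : ℕ) : ℚ) = k at hnK
    generalize hn : ((n : ℕ) : ℚ) = nn at hnK
    field_simp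
    ring

end Main

end StarFact10

theorem stmt10 {n : ℕ} [NeZero n] (hn : 2 ≤ n) (π : Equiv.Perm (Fin n))
    (m k : ℕ) (hm : m = (fullCycleType π).card)
    (hk : k = (Finset.univ.filter fun x : Fin n => π x = x ∧ x ≠ 0).card)
    (hnonneg : 2 * (k + 1) ≤ n + m) :
    ({l : List (Equiv.Perm (Fin n)) | IsStarFactorization π l ∧
        ∀ l', IsStarFactorization π l' → l.length ≤ l'.length}.ncard : ℚ) =
      ((n + m - 2 * (k + 1)).factorial * (fullCycleType π).prod : ℕ) /
        ((n - k).factorial : ℚ) := by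
  classical
  have hkK : k = StarFact10.Kk π := hk
  have hmM : m = StarFact10.Mn π := by
    rw [hm]
    unfold fullCycleType
    rw [Multiset.card_add, Multiset.card_replicate]
    exact (StarFact10.card_orbs_eq π).symm
  have hprodP : (fullCycleType π).prod = StarFact10.Pp π := by
    unfold fullCycleType
    rw [Multiset.prod_add, Multiset.prod_replicate, one_pow, mul_one]
    exact (StarFact10.prod_orbs_eq π).symm
  set m0 := (StarFact10.muZ π).toNat with hm0
  have hμeq : (m0 : ℤ) = StarFact10.muZ π := Int.toNat_of_nonneg (StarFact10.muZ_nonneg π)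
  have hmuval : StarFact10.muZ π
      = (n : ℤ) + StarFact10.Mn π - 2 * StarFact10.Kk π - 2 := rfl
  have hlen : n + m - 2 * (k + 1) = m0 := by
    rw [hmM, hkK] at hnonneg ⊢
    omega
  have hcount : ((StarFact10.FS π m0).ncard : ℚ) = StarFact10.Fq π :=
    StarFact10.main_count m0 π rfl
  have hFqpos : 0 < StarFact10.Fq π := by
    unfold StarFact10.Fq
    apply div_pos
    · have h1 := Nat.factorial_pos (StarFact10.muZ π).toNat
      have h2 := StarFact10.Pp_pos π
      have : (0 : ℚ) < ((StarFact10.muZ π).toNat.factorial : ℚ) := by exact_mod_cast h1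
      have h4 : (0 : ℚ) < (StarFact10.Pp π : ℚ) := by exact_mod_cast h2
      exact mul_pos this h4
    · exact_mod_cast Nat.factorial_pos _
  have hnonE : (StarFact10.FS π m0).Nonempty := by
    by_contra hc
    rw [Set.not_nonempty_iff_eq_empty] at hc
    rw [hc, Set.ncard_empty] at hcount
    rw [← hcount] at hFqpos
    norm_num at hFqpos
  obtain ⟨l0, hl0⟩ := hnonE
  have hsetEq : {l : List (Equiv.Perm (Fin n)) | IsStarFactorization π l ∧
      ∀ l', IsStarFactorization π l' → l.length ≤ l'.length} = StarFact10.FS π m0 := by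
    ext l
    simp only [Set.mem_setOf_eq, StarFact10.FS]
    constructor
    · rintro ⟨hf, hmin⟩
      refine ⟨hf, ?_⟩
      have h1 := hmin l0 hl0.1
      have h1' := hl0.2
      have h2 := StarFact10.lower_bound l π hf
      omega
    · rintro ⟨hf, hlen'⟩
      refine ⟨hf, fun l' hf' => ?_⟩
      have h2 := StarFact10.lower_bound l' π hf'
      omega
  rw [hsetEq, hcount, hlen, hprodP, hkK]
  unfold StarFact10.Fq
  rw [← hm0]
  push_cast
  ring
end

section
/- Let π ∈ S_n, let σ be a cycle of π whose orbit S does not contain 1, and suppose a star factorization f of π contains a contiguous block of factors τ_s, τ_{s+1}, ..., τ_{s+k} equal to (1 a_1), (1 a_k), (1 a_{k−1}), ..., (1 a_2), (1 a_1) where σ = (a_1 ⋯ a_k), and no other factors of f meet S. Then deleting this block from f yields a star factorization of the restriction of π to {1,...,n} \ S. -/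
lemma prod_fix_aux {n : ℕ} (p : Fin n) (L : List (Equiv.Perm (Fin n)))
    (h : ∀ τ ∈ L, τ p = p) : L.prod p = p := by
  induction L with
  | nil => simp
  | cons hd tl ih =>
    have : (hd :: tl).prod = hd * tl.prod := List.prod_cons
    rw [this, Equiv.Perm.mul_apply, ih (fun τ hτ => h τ (List.mem_cons_of_mem _ hτ)),
      h hd List.mem_cons_self]

lemma Q_lem {n : ℕ} [NeZero n] (a : ℕ → Fin n) (k : ℕ)
    (ha0 : ∀ i, a i ≠ 0)
    (hinj : ∀ i j, i < k → j < k → a i = a j → i = j) :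
    ∀ m, m ≤ k →
      ((m ≠ 0 →
          (List.ofFn fun t : Fin m => Equiv.swap 0 (a (m - 1 - t.val))).prod 0 = a 0) ∧
       (m ≠ 0 →
          (List.ofFn fun t : Fin m => Equiv.swap 0 (a (m - 1 - t.val))).prod (a (m - 1)) = 0) ∧
       (∀ i, i + 1 < m →
          (List.ofFn fun t : Fin m => Equiv.swap 0 (a (m - 1 - t.val))).prod (a i) = a (i + 1)) ∧
       (∀ x : Fin n, x ≠ 0 → (∀ i < m, x ≠ a i) →
          (List.ofFn fun t : Fin m => Equiv.swap 0 (a (m - 1 - t.val))).prod x = x)) := by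
  intro m
  induction m with
  | zero => intro _; refine ⟨by simp, by simp, ?_, ?_⟩ <;> intros <;> simp_all
  | succ m ih =>
    intro hm1
    have hmk : m ≤ k := Nat.le_of_succ_le hm1
    have hmk' : m < k := hm1
    obtain ⟨ih1, ih2, ih3, ih4⟩ := ih hmk
    have hsplit : (List.ofFn fun t : Fin (m + 1) => Equiv.swap 0 (a (m + 1 - 1 - t.val))) =
        Equiv.swap 0 (a m) :: (List.ofFn fun t : Fin m => Equiv.swap 0 (a (m - 1 - t.val))) := by
      rw [List.ofFn_succ]
      congr 1
      apply congrArg List.ofFn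
      funext t
      have ht : m + 1 - 1 - (t.succ : Fin (m+1)).val = m - 1 - t.val := by
        simp only [Fin.val_succ]; omega
      rw [ht]
    have hprod : (List.ofFn fun t : Fin (m + 1) => Equiv.swap 0 (a (m + 1 - 1 - t.val))).prod =
        Equiv.swap 0 (a m) *
          (List.ofFn fun t : Fin m => Equiv.swap 0 (a (m - 1 - t.val))).prod := by
      rw [hsplit, List.prod_cons]
    refine ⟨?_, ?_, ?_, ?_⟩
    · intro _
      rw [hprod, Equiv.Perm.mul_apply]
      rcases Nat.eq_zero_or_pos m with hm0 | hm0
      · subst hm0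
        simp
      · rw [ih1 (Nat.pos_iff_ne_zero.mp hm0)]
        have hne : a 0 ≠ a m := fun h => by
          have := hinj 0 m (lt_of_lt_of_le hm0 hmk) hmk' h
          omega
        exact Equiv.swap_apply_of_ne_of_ne (ha0 0) hne
    · intro _
      rw [hprod, Equiv.Perm.mul_apply]
      simp only [Nat.add_sub_cancel]
      have : (List.ofFn fun t : Fin m => Equiv.swap 0 (a (m - 1 - t.val))).prod (a m) = a m := by
        refine ih4 (a m) (ha0 m) (fun i hi h => ?_)
        have := hinj m i hmk' (lt_of_lt_of_le hi hmk) h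
        omega
      rw [this, Equiv.swap_apply_right]
    · intro i hi
      rw [hprod, Equiv.Perm.mul_apply]
      rcases Nat.lt_or_ge (i + 1) m with h | h
      · rw [ih3 i h]
        have hne : a (i + 1) ≠ a m := fun hh => by
          have := hinj (i + 1) m (lt_trans h hmk') hmk' hh
          omega
        exact Equiv.swap_apply_of_ne_of_ne (ha0 _) hne
      · have him : i + 1 = m := by omega
        have hm0 : m ≠ 0 := by omega
        have : a i = a (m - 1) := by rw [show m - 1 = i by omega]
        rw [this, ih2 hm0, Equiv.swap_apply_left, him]
    · intro x hx0 hxa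
      rw [hprod, Equiv.Perm.mul_apply,
        ih4 x hx0 (fun i hi => hxa i (Nat.lt_succ_of_lt hi))]
      exact Equiv.swap_apply_of_ne_of_ne hx0 (hxa m (Nat.lt_succ_self m))

/-- Deleting a contiguous block `(1 a₁)(1 a_k)(1 a_{k-1})⋯(1 a₂)(1 a₁)`
(corresponding to the cycle `σ = (a₁ ⋯ a_k)` of `π`, whose orbit `S` avoids
the symbol 1) from a star factorization of `π`, none of whose other factors
meets `S`, yields a star factorization of the restriction of `π` to the
complement of `S`: the product of the remaining factors fixes `S` pointwise
and agrees with `π` off `S`.  Here `a j = a_{j+1}`, `k`-periodically. -/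
theorem stmt18 {n : ℕ} [NeZero n] (π : Equiv.Perm (Fin n))
    (k : ℕ) (hk : 1 ≤ k) (a : ℕ → Fin n)
    (ha0 : ∀ i, a i ≠ 0)
    (hper : ∀ i, a (i + k) = a i)
    (hinj : ∀ i j, i < k → j < k → a i = a j → i = j)
    (hcyc : ∀ i, π (a i) = a (i + 1))
    (l₁ l₂ : List (Equiv.Perm (Fin n)))
    (hfact : IsStarFactorization π
      (l₁ ++ (Equiv.swap 0 (a 0) ::
        List.ofFn (fun t : Fin k => Equiv.swap 0 (a (k - 1 - t.val)))) ++ l₂))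
    (hmeet : ∀ τ ∈ l₁ ++ l₂, ∀ j < k, τ ≠ Equiv.swap 0 (a j)) :
    IsStarList (l₁ ++ l₂) ∧
    (∀ j < k, (l₁ ++ l₂).prod (a j) = a j) ∧
    (∀ x : Fin n, (∀ j < k, x ≠ a j) → (l₁ ++ l₂).prod x = π x) := by
  obtain ⟨hstar, hprodπ⟩ := hfact
  -- every factor of l₁ ++ l₂ fixes every a j
  have hfixfac : ∀ τ ∈ l₁ ++ l₂, ∀ j < k, τ (a j) = a j := by
    intro τ hτ j hj
    have hτbig : τ ∈ (l₁ ++ (Equiv.swap 0 (a 0) ::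
        List.ofFn (fun t : Fin k => Equiv.swap 0 (a (k - 1 - t.val)))) ++ l₂) := by
      rcases List.mem_append.mp hτ with h | h
      · exact List.mem_append_left _ (List.mem_append_left _ h)
      · exact List.mem_append_right _ h
    obtain ⟨i, hi0, rfl⟩ := hstar τ hτbig
    have hne : a j ≠ i := fun h => hmeet _ hτ j hj (by rw [h])
    exact Equiv.swap_apply_of_ne_of_ne (ha0 j) hne
  have hstar' : ∀ τ ∈ l₁ ++ l₂, ∃ i : Fin n, i ≠ 0 ∧ τ = Equiv.swap 0 i := by
    intro τ hτ
    apply hstar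
    rcases List.mem_append.mp hτ with h | h
    · exact List.mem_append_left _ (List.mem_append_left _ h)
    · exact List.mem_append_right _ h
  have hfix : ∀ j < k, (l₁ ++ l₂).prod (a j) = a j := fun j hj =>
    prod_fix_aux _ _ (fun τ hτ => hfixfac τ hτ j hj)
  refine ⟨hstar', hfix, ?_⟩
  -- B.prod fixes everything off {a i}
  obtain ⟨hQ0, hQend, hQmid, hQfix⟩ := Q_lem a k ha0 hinj k le_rfl
  have hBfix : ∀ y : Fin n, (∀ i < k, y ≠ a i) →
      (Equiv.swap 0 (a 0) *
        (List.ofFn fun t : Fin k => Equiv.swap 0 (a (k - 1 - t.val))).prod) y = y := by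
    intro y hy
    rcases eq_or_ne y 0 with rfl | hy0
    · rw [Equiv.Perm.mul_apply, hQ0 (by omega), Equiv.swap_apply_right]
    · rw [Equiv.Perm.mul_apply, hQfix y hy0 hy]
      exact Equiv.swap_apply_of_ne_of_ne hy0 (hy 0 (by omega))
  intro x hx
  have hl₂fix : ∀ j < k, l₂.prod (a j) = a j := fun j hj =>
    prod_fix_aux _ _ (fun τ hτ => hfixfac τ (List.mem_append_right _ hτ) j hj)
  have hy : ∀ i < k, l₂.prod x ≠ a i := by
    intro i hi h
    exact hx i hi (l₂.prod.injective (by rw [h, hl₂fix i hi]))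
  rw [← hprodπ]
  rw [List.prod_append, List.prod_append, List.prod_append, List.prod_cons]
  simp only [Equiv.Perm.mul_apply]
  rw [show (Equiv.swap 0 (a 0)) ((List.ofFn fun t : Fin k =>
      Equiv.swap 0 (a (k - 1 - t.val))).prod (l₂.prod x)) =
      (Equiv.swap 0 (a 0) * (List.ofFn fun t : Fin k =>
      Equiv.swap 0 (a (k - 1 - t.val))).prod) (l₂.prod x) from rfl,
    hBfix _ hy]
end
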